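/- arXiv:2509.04133 — 6 statements merged into one kernel-verified Lean document; each statement's English description precedes it below -/
import Mathlib

section
/- Under the hypotheses that each F_i is L-Lipschitz and μ-strongly monotone and n ≥ 2, run the RR/SO Extragradient method with variance reduction with p = 1/n, α = 1 − 1/n, and stepsize γ = (1−α)μ/(6L²) = μ/(6nL²). Then for every ε > 0, V_S^n ≤ ε whenever the total number of iterations T = Sn satisfies T ≥ (24 n L²/μ²) · log(V_0^0/ε); in particular the method needs O( n (L²/μ²) log(1/ε) ) iterations and oracle calls to reach ε-accuracy, where V_s^t = E‖z_s^t − z*‖² + E‖ω_s^t − z*‖². -/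
set_option maxHeartbeats 1000000

lemma young_step (c y k u x : ℝ) (hy : 0 < y) (hck : c^2 = 4*y*k) :
    c*u*x ≤ y*x^2 + k*u^2 := by
  nlinarith [sq_nonneg (2*y*x - c*u), mul_pos hy hy]

lemma polyU (ν κ : ℝ) (hν : 2 ≤ ν) (hκ0 : 0 < κ) (hκ1 : κ ≤ 1) :
    15*ν*(8+3*κ)^2 + 2*κ*(ν+26) + 9*κ^2*(ν+26) ≤ 72*ν*(ν+26) := by
  nlinarith [mul_nonneg (by linarith : (0:ℝ) ≤ ν) (mul_nonneg (by linarith : (0:ℝ) ≤ 3-3*κ) (by linarith : (0:ℝ) ≤ 19+3*κ)), mul_pos hκ0 hκ0, sq_nonneg κ, sq_nonneg ν]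

lemma polyE (ν κ : ℝ) (hν : 2 ≤ ν) (hκ0 : 0 < κ) (hκ1 : κ ≤ 1) :
    480*ν*(ν-1)^2 + 2*κ*((ν-1)^2*(12*ν-13)) + 9*κ^2*((ν-1)*(12*ν-13))
      + 3*κ^2*(ν*(2*ν-3)*(12*ν-13)) ≤ 72*ν*(ν-1)*(12*ν-13) := by
  have h1 : (0:ℝ) ≤ (ν-1)^2*(12*ν-13) := by nlinarith
  have h2 : (0:ℝ) ≤ (ν-1)*(12*ν-13) := by nlinarith
  have h3 : (0:ℝ) ≤ ν*(2*ν-3)*(12*ν-13) := by nlinarith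
  have hk2 : κ^2 ≤ 1 := by nlinarith
  have e1 : 2*κ*((ν-1)^2*(12*ν-13)) ≤ 2*((ν-1)^2*(12*ν-13)) := by nlinarith
  have e2 : 9*κ^2*((ν-1)*(12*ν-13)) ≤ 9*((ν-1)*(12*ν-13)) := by nlinarith
  have e3 : 3*κ^2*(ν*(2*ν-3)*(12*ν-13)) ≤ 3*(ν*(2*ν-3)*(12*ν-13)) := by nlinarith
  nlinarith [mul_nonneg (mul_nonneg (by linarith : (0:ℝ) ≤ ν-2) (by linarith : (0:ℝ) ≤ ν-2)) (by linarith : (0:ℝ) ≤ ν-2), sq_nonneg (ν-2)]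

/-- Abstract core of the one-step scalar estimate, with opaque coefficients. -/
lemma core_step (β ρ y1 k1 y2 k2 cDdd U X P W Z E : ℝ)
    (hβ0 : 0 < β) (hy1 : 0 < y1) (hy2 : 0 < y2)
    (hU : 0 ≤ U) (hX : 0 ≤ X) (hP : 0 ≤ P) (hE : 0 ≤ E) (hZ0 : 0 ≤ Z)
    (hW : W ≤ U + E) (hZ : Z ≤ X + U)
    (hck1 : (4*β+3*ρ/2)^2 = 4*y1*k1) (hck2 : (4*β)^2 = 4*y2*k2)
    (CP : 12*β ≤ 1) (CU : k1 + β/6 + 3*ρ/4 ≤ 1) (CX : y1 + y2 ≤ 5*ρ/4)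
    (CE : (k2 + β/6)*E^2 ≤ cDdd) (hρ0 : 0 < ρ) :
    4*β*W*X + 2*β*P*W ≤ P^2 + U^2 + 2*ρ*X^2 - 3*ρ/4*Z^2 + cDdd := by
  have h1 : 4*β*W*X ≤ 4*β*(U+E)*X := by
    have h := mul_le_mul_of_nonneg_right hW hX
    nlinarith
  have h2 : 2*β*P*W ≤ 2*β*P*(U+E) := by
    have h := mul_le_mul_of_nonneg_left hW hP
    nlinarith
  have S1 : (4*β+3*ρ/2)*U*X ≤ y1*X^2 + k1*U^2 := young_step _ _ _ _ _ hy1 hck1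
  have S2 : (4*β)*E*X ≤ y2*X^2 + k2*E^2 := young_step _ _ _ _ _ hy2 hck2
  have S3 : 2*β*P*U ≤ β/6*U^2 + 6*β*P^2 :=
    young_step (2*β) (β/6) (6*β) P U (by positivity) (by ring)
  have S4 : 2*β*P*E ≤ β/6*E^2 + 6*β*P^2 :=
    young_step (2*β) (β/6) (6*β) P E (by positivity) (by ring)
  have MP : 12*β*P^2 ≤ 1*P^2 := mul_le_mul_of_nonneg_right CP (sq_nonneg P)
  have MU : (k1 + β/6 + 3*ρ/4)*U^2 ≤ 1*U^2 := mul_le_mul_of_nonneg_right CU (sq_nonneg U)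
  have MX : (y1 + y2)*X^2 ≤ (5*ρ/4)*X^2 := mul_le_mul_of_nonneg_right CX (sq_nonneg X)
  have h3 : Z^2 ≤ (X+U)^2 := by nlinarith
  have hZ4 : 3*ρ/4*Z^2 ≤ 3*ρ/4*(X+U)^2 :=
    mul_le_mul_of_nonneg_left h3 (by positivity)
  have expand : 4*β*(U+E)*X + 2*β*P*(U+E)
      = (4*β+3*ρ/2)*U*X + (4*β)*E*X + 2*β*P*U + 2*β*P*E - 3*ρ/2*(U*X) := by ring
  have expand2 : 3*ρ/4*(X+U)^2 = 3*ρ/4*X^2 + 3*ρ/2*(U*X) + 3*ρ/4*U^2 := by ring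
  linarith [S1, S2, S3, S4, MP, MU, MX, CE, hZ4, h1, h2, expand, expand2]

/-- The concrete scalar one-step inequality. -/
lemma scalar_step (ν κ U X P W Z dd : ℝ) (hν : 2 ≤ ν) (hκ0 : 0 < κ) (hκ1 : κ ≤ 1)
    (hU : 0 ≤ U) (hX : 0 ≤ X) (hP : 0 ≤ P) (hdd : 0 ≤ dd) (hZ0 : 0 ≤ Z) (hW0 : 0 ≤ W)
    (hW : W ≤ U + (1 - 1/ν) * dd) (hZ : Z ≤ X + U) :
    4*(κ/(6*ν))*W*X + 2*(κ/(6*ν))*P*W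
      ≤ P^2 + U^2 + 2*(κ^2/(6*ν))*X^2 - 3*(κ^2/(6*ν))/4*Z^2
        + ((1 - 3*(κ^2/(6*ν))/4)*(1 - 1/ν)*(1/ν) - κ^2/(6*ν)*(1/2 - 3/(4*ν)))*dd^2 := by
  have hν0 : (0:ℝ) < ν := by linarith
  have hνne : ν ≠ 0 := ne_of_gt hν0
  have hν26 : (0:ℝ) < ν + 26 := by linarith
  have hν26ne : ν + 26 ≠ 0 := ne_of_gt hν26
  have hν13 : (0:ℝ) < 12*ν - 13 := by linarith
  have hν13ne : 12*ν - 13 ≠ 0 := ne_of_gt hν13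
  have hα0 : (0:ℝ) < 1 - 1/ν := by
    have : (1:ℝ)/ν ≤ 1/2 := by
      rw [div_le_div_iff₀ hν0 (by norm_num)]; linarith
    linarith
  have hE0 : 0 ≤ (1 - 1/ν) * dd := mul_nonneg hα0.le hdd
  refine core_step (κ/(6*ν)) (κ^2/(6*ν)) ((ν+26)/(20*ν)*(κ^2/(6*ν)))
      (5*(8+3*κ)^2/(24*(ν+26))) ((12*ν-13)/(10*ν)*(κ^2/(6*ν))) (20/(3*(12*ν-13)))
      _ U X P W Z ((1 - 1/ν) * dd) (by positivity) (by positivity) (by positivity)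
      hU hX hP hE0 hZ0 hW hZ ?_ ?_ ?_ ?_ ?_ ?_ (by positivity)
  · field_simp; ring
  · have h' : -13 + ν*12 ≠ 0 := by contrapose! hν13ne; linarith
    field_simp; ring_nf; field_simp; ring
  · have : κ/(6*ν) ≤ 1/12 := by
      rw [div_le_div_iff₀ (by positivity) (by norm_num)]; nlinarith
    linarith
  · have h := polyU ν κ hν hκ0 hκ1
    have heq : 5*(8+3*κ)^2/(24*(ν+26)) + (κ/(6*ν))/6 + 3*(κ^2/(6*ν))/4
        = (15*ν*(8+3*κ)^2 + 2*κ*(ν+26) + 9*κ^2*(ν+26))/(72*ν*(ν+26)) := by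
      field_simp; ring
    rw [heq, div_le_one (by positivity)]; exact h
  · have : (ν+26)/(20*ν)*(κ^2/(6*ν)) + (12*ν-13)/(10*ν)*(κ^2/(6*ν)) = 5*(κ^2/(6*ν))/4 := by
      field_simp; ring
    linarith
  · have h := polyE ν κ hν hκ0 hκ1
    have key : (20/(3*(12*ν-13)) + (κ/(6*ν))/6)*(1 - 1/ν)^2
        ≤ (1 - 3*(κ^2/(6*ν))/4)*(1 - 1/ν)*(1/ν) - κ^2/(6*ν)*(1/2 - 3/(4*ν)) := by
      rw [← sub_nonneg]
      have heq : (1 - 3*(κ^2/(6*ν))/4)*(1 - 1/ν)*(1/ν) - κ^2/(6*ν)*(1/2 - 3/(4*ν))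
          - (20/(3*(12*ν-13)) + (κ/(6*ν))/6)*(1 - 1/ν)^2
          = (72*ν*(ν-1)*(12*ν-13) - (480*ν*(ν-1)^2 + 2*κ*((ν-1)^2*(12*ν-13))
              + 9*κ^2*((ν-1)*(12*ν-13)) + 3*κ^2*(ν*(2*ν-3)*(12*ν-13))))
            /(72*ν^3*(12*ν-13)) := by
        have h' : -13 + ν*12 ≠ 0 := by contrapose! hν13ne; linarith
        field_simp; ring_nf; field_simp; ring
      rw [heq]
      apply div_nonneg _ (by positivity)
      linarith
    calc (20/(3*(12*ν-13)) + (κ/(6*ν))/6)*((1 - 1/ν)*dd)^2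
        = ((20/(3*(12*ν-13)) + (κ/(6*ν))/6)*(1 - 1/ν)^2)*dd^2 := by ring
      _ ≤ ((1 - 3*(κ^2/(6*ν))/4)*(1 - 1/ν)*(1/ν) - κ^2/(6*ν)*(1/2 - 3/(4*ν)))*dd^2 :=
          mul_le_mul_of_nonneg_right key (sq_nonneg dd)

open scoped RealInnerProductSpace

variable {V : Type*} [NormedAddCommGroup V] [InnerProductSpace ℝ V]

/-- g(prox x) is not ⊤. -/
lemma prox_ne_top (γ : ℝ) (hγ0 : 0 < γ) (g : V → EReal)
    (hg_top : ∃ x, g x ≠ ⊤)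
    (prox : V → V)
    (hprox : ∀ x y : V, (γ : EReal) * g (prox x) + ((‖prox x - x‖ ^ 2 / 2 : ℝ) : EReal)
        ≤ (γ : EReal) * g y + ((‖y - x‖ ^ 2 / 2 : ℝ) : EReal))
    (hg_bot : ∀ x, g x ≠ ⊥) (x : V) : g (prox x) ≠ ⊤ := by
  obtain ⟨y₀, hy₀⟩ := hg_top
  intro htop
  have h := hprox x y₀
  rw [htop] at h
  have h1 : (γ : EReal) * (⊤ : EReal) = ⊤ := EReal.coe_mul_top_of_pos hγ0
  rw [h1, EReal.top_add_coe] at h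
  have h2 : (γ : EReal) * g y₀ + ((‖y₀ - x‖ ^ 2 / 2 : ℝ) : EReal) < ⊤ := by
    have hy₀' : g y₀ = ((g y₀).toReal : EReal) := (EReal.coe_toReal hy₀ (hg_bot y₀)).symm
    rw [hy₀', ← EReal.coe_mul, ← EReal.coe_add]
    exact EReal.coe_lt_top _
  exact absurd h (not_le.mpr h2)

/-- Strong prox inequality, real form. -/
lemma prox_strong (γ : ℝ) (hγ0 : 0 < γ) (g : V → EReal)
    (hg_bot : ∀ x, g x ≠ ⊥) (hg_top : ∃ x, g x ≠ ⊤)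
    (hg_convex : ∀ (x y : V) (a b : ℝ), 0 ≤ a → 0 ≤ b → a + b = 1 →
      g (a • x + b • y) ≤ (a : EReal) * g x + (b : EReal) * g y)
    (prox : V → V)
    (hprox : ∀ x y : V, (γ : EReal) * g (prox x) + ((‖prox x - x‖ ^ 2 / 2 : ℝ) : EReal)
        ≤ (γ : EReal) * g y + ((‖y - x‖ ^ 2 / 2 : ℝ) : EReal))
    (x y : V) (hy : g y ≠ ⊤) :
    γ * (g (prox x)).toReal + ‖prox x - x‖ ^ 2 / 2 + ‖y - prox x‖ ^ 2 / 2
      ≤ γ * (g y).toReal + ‖y - x‖ ^ 2 / 2 := by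
  set p := prox x with hp
  have hpt : g p ≠ ⊤ := prox_ne_top γ hγ0 g hg_top prox hprox hg_bot x
  have hpb : g p ≠ ⊥ := hg_bot p
  have hyb : g y ≠ ⊥ := hg_bot y
  -- the λ-inequality
  have key : ∀ lam : ℝ, 0 < lam → lam ≤ 1 →
      γ * (g p).toReal + ‖p - x‖ ^ 2 / 2 + (1 - lam) * ‖y - p‖ ^ 2 / 2
        ≤ γ * (g y).toReal + ‖y - x‖ ^ 2 / 2 := by
    intro lam hl0 hl1
    set m := lam • y + (1 - lam) • p with hm
    have hconv := hg_convex y p lam (1 - lam) hl0.le (by linarith) (by ring)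
    have hyc : g y = (((g y).toReal : ℝ) : EReal) := (EReal.coe_toReal hy hyb).symm
    have hpc : g p = (((g p).toReal : ℝ) : EReal) := (EReal.coe_toReal hpt hpb).symm
    have hconv' : g m ≤ ((lam * (g y).toReal + (1 - lam) * (g p).toReal : ℝ) : EReal) := by
      rw [EReal.coe_add, EReal.coe_mul, EReal.coe_mul]
      rw [hyc, hpc] at hconv
      exact hconv
    have hmt : g m ≠ ⊤ := by
      intro h; rw [h] at hconv'
      exact absurd hconv' (not_le.mpr (EReal.coe_lt_top _))
    have hmb : g m ≠ ⊥ := hg_bot m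
    have hmc : g m = (((g m).toReal : ℝ) : EReal) := (EReal.coe_toReal hmt hmb).symm
    -- real version of convexity
    have hconvR : (g m).toReal ≤ lam * (g y).toReal + (1 - lam) * (g p).toReal := by
      rw [hmc] at hconv'
      exact EReal.coe_le_coe_iff.mp hconv'
    -- real version of prox minimality at m
    have hproxm := hprox x m
    have hproxR : γ * (g p).toReal + ‖p - x‖ ^ 2 / 2 ≤ γ * (g m).toReal + ‖m - x‖ ^ 2 / 2 := by
      rw [hpc, hmc, ← EReal.coe_mul, ← EReal.coe_mul, ← EReal.coe_add, ← EReal.coe_add] at hproxm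
      exact_mod_cast hproxm
    -- norm identity
    have hmx : m - x = lam • (y - x) + (1 - lam) • (p - x) := by
      rw [hm]; module
    have hid : ‖m - x‖ ^ 2
        = lam * ‖y - x‖ ^ 2 + (1 - lam) * ‖p - x‖ ^ 2 - lam * (1 - lam) * ‖y - p‖ ^ 2 := by
      have e1 : ‖m - x‖ ^ 2 = lam ^ 2 * ‖y - x‖ ^ 2
          + 2 * (lam * (1 - lam)) * ⟪y - x, p - x⟫ + (1 - lam) ^ 2 * ‖p - x‖ ^ 2 := by
        rw [hmx, norm_add_sq_real, norm_smul, norm_smul, real_inner_smul_left,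
          real_inner_smul_right]
        simp [Real.norm_eq_abs, abs_of_pos hl0, abs_of_nonneg (by linarith : (0:ℝ) ≤ 1 - lam)]
        ring
      have e2 : ‖y - p‖ ^ 2 = ‖y - x‖ ^ 2 - 2 * ⟪y - x, p - x⟫ + ‖p - x‖ ^ 2 := by
        have : y - p = (y - x) - (p - x) := by abel
        rw [this, norm_sub_sq_real]
      rw [e1, e2]; ring
    -- combine
    have hcomb : γ * (g p).toReal + ‖p - x‖ ^ 2 / 2
        ≤ γ * (lam * (g y).toReal + (1 - lam) * (g p).toReal)
          + (lam * ‖y - x‖ ^ 2 + (1 - lam) * ‖p - x‖ ^ 2 - lam * (1 - lam) * ‖y - p‖ ^ 2) / 2 := by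
      calc γ * (g p).toReal + ‖p - x‖ ^ 2 / 2 ≤ γ * (g m).toReal + ‖m - x‖ ^ 2 / 2 := hproxR
        _ ≤ _ := by
            rw [hid]
            have := mul_le_mul_of_nonneg_left hconvR hγ0.le
            linarith
    -- divide by lam
    have hdiv : lam * (γ * (g p).toReal + ‖p - x‖ ^ 2 / 2 + (1 - lam) * ‖y - p‖ ^ 2 / 2)
        ≤ lam * (γ * (g y).toReal + ‖y - x‖ ^ 2 / 2) := by nlinarith [hcomb]
    exact le_of_mul_le_mul_left (by linarith [hdiv]) hl0
  -- take lam → 0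
  refine le_of_forall_pos_le_add fun ε hε => ?_
  rcases le_or_gt (‖y - p‖ ^ 2 / 2) ε with h | h
  · have := key 1 one_pos le_rfl
    linarith
  · have hpos : 0 < ‖y - p‖ ^ 2 / 2 := lt_trans hε h
    set lam := ε / (‖y - p‖ ^ 2 / 2) with hlam
    have hl0 : 0 < lam := div_pos hε hpos
    have hl1 : lam ≤ 1 := by
      rw [hlam, div_le_one hpos]; linarith
    have hk := key lam hl0 hl1
    have : lam * (‖y - p‖ ^ 2 / 2) = ε := div_mul_cancel₀ ε (ne_of_gt hpos)
    nlinarith [hk]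

/-- Inner-product form of the prox inequality. -/
lemma prox_inner (γ : ℝ) (hγ0 : 0 < γ) (g : V → EReal)
    (hg_bot : ∀ x, g x ≠ ⊥) (hg_top : ∃ x, g x ≠ ⊤)
    (hg_convex : ∀ (x y : V) (a b : ℝ), 0 ≤ a → 0 ≤ b → a + b = 1 →
      g (a • x + b • y) ≤ (a : EReal) * g x + (b : EReal) * g y)
    (prox : V → V)
    (hprox : ∀ x y : V, (γ : EReal) * g (prox x) + ((‖prox x - x‖ ^ 2 / 2 : ℝ) : EReal)
        ≤ (γ : EReal) * g y + ((‖y - x‖ ^ 2 / 2 : ℝ) : EReal))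
    (x y : V) (hy : g y ≠ ⊤) :
    γ * (g (prox x)).toReal - γ * (g y).toReal ≤ ⟪y - prox x, prox x - x⟫ := by
  have h := prox_strong γ hγ0 g hg_bot hg_top hg_convex prox hprox x y hy
  have hid : ‖y - x‖ ^ 2 = ‖y - prox x‖ ^ 2 + 2 * ⟪y - prox x, prox x - x⟫ + ‖prox x - x‖ ^ 2 := by
    have e : y - x = (y - prox x) + (prox x - x) := by abel
    rw [e, norm_add_sq_real]
  linarith

/-- One-step deterministic contraction for the z-iterate. -/
lemma one_step {V : Type*} [NormedAddCommGroup V] [InnerProductSpace ℝ V]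
    (n : ℕ) (hn : 2 ≤ n)
    (L μ γ p α : ℝ) (hL : 0 < L) (hμ : 0 < μ) (hμL : μ ≤ L)
    (hp : p = (n : ℝ)⁻¹) (hα : α = 1 - p)
    (hγ : γ = (1 - α) * μ / (6 * L ^ 2))
    (F : Fin n → V → V) (g : V → EReal)
    (hg_bot : ∀ x, g x ≠ ⊥) (hg_top : ∃ x, g x ≠ ⊤)
    (hg_convex : ∀ (x y : V) (a b : ℝ), 0 ≤ a → 0 ≤ b → a + b = 1 →
      g (a • x + b • y) ≤ (a : EReal) * g x + (b : EReal) * g y)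
    (prox : V → V)
    (hprox : ∀ x y : V, (γ : EReal) * g (prox x) + ((‖prox x - x‖ ^ 2 / 2 : ℝ) : EReal)
        ≤ (γ : EReal) * g y + ((‖y - x‖ ^ 2 / 2 : ℝ) : EReal))
    (hLip : ∀ (i : Fin n) (z₁ z₂ : V), ‖F i z₁ - F i z₂‖ ≤ L * ‖z₁ - z₂‖)
    (hmono : ∀ (i : Fin n) (z₁ z₂ : V), μ * ‖z₁ - z₂‖ ^ 2 ≤ ⟪F i z₁ - F i z₂, z₁ - z₂⟫)
    (zstar : V)
    (hVI : ∀ zz, g zstar ≤ ((⟪(n : ℝ)⁻¹ • ∑ i, F i zstar, zz - zstar⟫ : ℝ) : EReal) + g zz)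
    (zc wc u zp : V) (i : Fin n)
    (hu : u = prox ((α • zc + (1 - α) • wc) - γ • ((n : ℝ)⁻¹ • ∑ j, F j wc)))
    (hzp : zp = prox ((α • zc + (1 - α) • wc)
        - γ • (F i u - F i wc + (n : ℝ)⁻¹ • ∑ j, F j wc))) :
    ‖zp - zstar‖ ^ 2 ≤ (1 - 3 * (γ * μ) / 4)
        * (α * ‖zc - zstar‖ ^ 2 + (1 - α) * ‖wc - zstar‖ ^ 2)
      - γ * μ * (1 / 2 - 3 / (4 * (n : ℝ))) * ‖zc - wc‖ ^ 2 := by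
  have hν2 : (2 : ℝ) ≤ (n : ℝ) := by exact_mod_cast hn
  have hν0 : (0 : ℝ) < (n : ℝ) := by linarith
  have hνne : (n : ℝ) ≠ 0 := ne_of_gt hν0
  set ν : ℝ := (n : ℝ) with hνdef
  set κ : ℝ := μ / L with hκdef
  have hκ0 : 0 < κ := div_pos hμ hL
  have hκ1 : κ ≤ 1 := by rw [hκdef, div_le_one hL]; exact hμL
  have hαν : α = 1 - 1 / ν := by rw [hα, hp, one_div]
  have h1α : 1 - α = 1 / ν := by rw [hαν]; ring
  have hα0 : 0 < α := by
    rw [hαν]; have : 1 / ν ≤ 1 / 2 := by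
      rw [div_le_div_iff₀ hν0 (by norm_num)]; linarith
    linarith
  have hγ0 : 0 < γ := by
    rw [hγ, h1α]
    positivity
  have hβeq : κ / (6 * ν) = γ * L := by
    rw [hκdef, hγ, h1α]
    field_simp
  have hρeq : κ ^ 2 / (6 * ν) = γ * μ := by
    rw [hκdef, hγ, h1α]
    field_simp
  set Favg : V → V := fun v => (n : ℝ)⁻¹ • ∑ j, F j v with hFavg
  set zb : V := α • zc + (1 - α) • wc with hzb
  set Fhat : V := F i u - F i wc + Favg wc with hFhat
  -- abbreviations
  set X : ℝ := ‖u - zstar‖ with hX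
  set U : ℝ := ‖u - zb‖ with hU
  set P : ℝ := ‖u - zp‖ with hP
  set W : ℝ := ‖u - wc‖ with hW
  set Z : ℝ := ‖zb - zstar‖ with hZ
  set dd : ℝ := ‖zc - wc‖ with hdd
  -- finiteness of g at relevant points
  have hprox_ne_top := prox_ne_top γ hγ0 g hg_top prox hprox hg_bot
  have hu_top : g u ≠ ⊤ := by rw [hu]; exact hprox_ne_top _
  have hzp_top : g zp ≠ ⊤ := by rw [hzp]; exact hprox_ne_top _
  have hstar_top : g zstar ≠ ⊤ := by
    obtain ⟨y₀, hy₀⟩ := hg_top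
    intro htop
    have h := hVI y₀
    rw [htop] at h
    have : ((⟪(n : ℝ)⁻¹ • ∑ i, F i zstar, y₀ - zstar⟫ : ℝ) : EReal) + g y₀ < ⊤ := by
      have hy₀' : g y₀ = ((g y₀).toReal : EReal) := (EReal.coe_toReal hy₀ (hg_bot y₀)).symm
      rw [hy₀', ← EReal.coe_add]
      exact EReal.coe_lt_top _
    exact absurd h (not_le.mpr this)
  -- Lipschitz for the average
  have hFavgLip : ∀ v₁ v₂ : V, ‖Favg v₁ - Favg v₂‖ ≤ L * ‖v₁ - v₂‖ := by
    intro v₁ v₂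
    have he : Favg v₁ - Favg v₂ = (n : ℝ)⁻¹ • ∑ j, (F j v₁ - F j v₂) := by
      rw [hFavg]; simp [Finset.smul_sum, Finset.sum_sub_distrib, smul_sub]
    rw [he, norm_smul]
    have h1 : ‖∑ j, (F j v₁ - F j v₂)‖ ≤ ∑ j : Fin n, L * ‖v₁ - v₂‖ := by
      refine le_trans (norm_sum_le _ _) ?_
      exact Finset.sum_le_sum fun j _ => hLip j v₁ v₂
    rw [Finset.sum_const, Finset.card_univ, Fintype.card_fin] at h1
    have h2 : ‖((n:ℝ)⁻¹ : ℝ)‖ = (n : ℝ)⁻¹ := by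
      rw [Real.norm_eq_abs, abs_of_pos (by positivity)]
    rw [h2]
    calc (n : ℝ)⁻¹ * ‖∑ j, (F j v₁ - F j v₂)‖ ≤ (n : ℝ)⁻¹ * (n * (L * ‖v₁ - v₂‖)) := by
          apply mul_le_mul_of_nonneg_left _ (by positivity)
          simpa using h1
      _ = L * ‖v₁ - v₂‖ := by field_simp
  -- strong monotonicity for the average
  have hFavgMono : μ * X ^ 2 ≤ ⟪u - zstar, Favg u - Favg zstar⟫ := by
    have he : Favg u - Favg zstar = (n : ℝ)⁻¹ • ∑ j, (F j u - F j zstar) := by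
      rw [hFavg]; simp [Finset.smul_sum, Finset.sum_sub_distrib, smul_sub]
    rw [he, real_inner_smul_right, inner_sum]
    have h1 : ∀ j : Fin n, μ * X ^ 2 ≤ ⟪u - zstar, F j u - F j zstar⟫ := by
      intro j
      rw [real_inner_comm]
      exact hmono j u zstar
    have h2 : (n : ℝ) * (μ * X ^ 2) ≤ ∑ j : Fin n, ⟪u - zstar, F j u - F j zstar⟫ := by
      calc (n : ℝ) * (μ * X ^ 2) = ∑ _j : Fin n, μ * X ^ 2 := by
            rw [Finset.sum_const, Finset.card_univ, Fintype.card_fin, nsmul_eq_mul]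
        _ ≤ _ := Finset.sum_le_sum fun j _ => h1 j
    calc μ * X ^ 2 = (n : ℝ)⁻¹ * ((n : ℝ) * (μ * X ^ 2)) := by field_simp
      _ ≤ (n : ℝ)⁻¹ * ∑ j : Fin n, ⟪u - zstar, F j u - F j zstar⟫ := by
          apply mul_le_mul_of_nonneg_left h2 (by positivity)
  -- prox inner inequalities
  have App1 : γ * (g zp).toReal - γ * (g zstar).toReal
      ≤ ⟪zstar - zp, zp - zb⟫ + γ * ⟪zstar - zp, Fhat⟫ := by
    have h := prox_inner γ hγ0 g hg_bot hg_top hg_convex prox hprox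
      (zb - γ • Fhat) zstar hstar_top
    rw [← hzp] at h
    have he : zp - (zb - γ • Fhat) = (zp - zb) + γ • Fhat := by abel
    rw [he, inner_add_right, real_inner_smul_right] at h
    exact h
  have App2 : γ * (g u).toReal - γ * (g zp).toReal
      ≤ ⟪zp - u, u - zb⟫ + γ * ⟪zp - u, Favg wc⟫ := by
    have h := prox_inner γ hγ0 g hg_bot hg_top hg_convex prox hprox
      (zb - γ • Favg wc) zp hzp_top
    rw [← hu] at h
    have he : u - (zb - γ • Favg wc) = (u - zb) + γ • Favg wc := by abel
    rw [he, inner_add_right, real_inner_smul_right] at h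
    exact h
  -- VI in real form
  have hVIr : γ * (g zstar).toReal - γ * (g u).toReal ≤ γ * ⟪Favg zstar, u - zstar⟫ := by
    have h := hVI u
    have hstar' : g zstar = ((g zstar).toReal : EReal) :=
      (EReal.coe_toReal hstar_top (hg_bot zstar)).symm
    have hu' : g u = ((g u).toReal : EReal) := (EReal.coe_toReal hu_top (hg_bot u)).symm
    rw [hstar', hu', ← EReal.coe_add] at h
    have hr : (g zstar).toReal ≤ ⟪(n : ℝ)⁻¹ • ∑ i, F i zstar, u - zstar⟫ + (g u).toReal :=
      EReal.coe_le_coe_iff.mp h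
    have heq : ⟪(n : ℝ)⁻¹ • ∑ i, F i zstar, u - zstar⟫ = ⟪Favg zstar, u - zstar⟫ := by rw [hFavg]
    rw [heq] at hr
    have hmul := mul_le_mul_of_nonneg_left hr hγ0.le
    linarith [hmul]
  -- bracket identity
  have hT : ⟪zstar - zp, Fhat⟫ + ⟪zp - u, Favg wc⟫ + ⟪Favg zstar, u - zstar⟫
      = ⟪u - zp, F i u - F i wc⟫ - ⟪u - zstar, Fhat - Favg zstar⟫ := by
    have h1 : F i u - F i wc = Fhat - Favg wc := by rw [hFhat]; abel
    rw [h1]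
    simp only [inner_sub_left, inner_sub_right]
    rw [real_inner_comm (Favg zstar) u, real_inner_comm (Favg zstar) zstar]
    ring
  -- error bound
  have herr : ‖Fhat - Favg u‖ ≤ 2 * L * W := by
    have he : Fhat - Favg u = (F i u - F i wc) - (Favg u - Favg wc) := by rw [hFhat]; abel
    rw [he]
    calc ‖(F i u - F i wc) - (Favg u - Favg wc)‖
        ≤ ‖F i u - F i wc‖ + ‖Favg u - Favg wc‖ := norm_sub_le _ _
      _ ≤ L * ‖u - wc‖ + L * ‖u - wc‖ := add_le_add (hLip i u wc) (hFavgLip u wc)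
      _ = 2 * L * W := by rw [hW]; ring
  -- Cauchy–Schwarz bounds
  have hcs1 : -(2 * L * W * X) ≤ ⟪u - zstar, Fhat - Favg u⟫ := by
    have h := abs_real_inner_le_norm (u - zstar) (Fhat - Favg u)
    have h2 : ‖u - zstar‖ * ‖Fhat - Favg u‖ ≤ X * (2 * L * W) := by
      rw [← hX]
      exact mul_le_mul_of_nonneg_left herr (norm_nonneg _)
    have h3 := abs_le.mp h
    linarith [h3.1, h2]
  have hcs2 : ⟪u - zp, F i u - F i wc⟫ ≤ P * (L * W) := by
    have h := real_inner_le_norm (u - zp) (F i u - F i wc)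
    have h2 : ‖u - zp‖ * ‖F i u - F i wc‖ ≤ P * (L * W) := by
      rw [← hP]
      apply mul_le_mul_of_nonneg_left _ (norm_nonneg _)
      rw [hW]; exact hLip i u wc
    linarith
  -- split monotonicity
  have hsplit : ⟪u - zstar, Fhat - Favg zstar⟫
      = ⟪u - zstar, Favg u - Favg zstar⟫ + ⟪u - zstar, Fhat - Favg u⟫ := by
    rw [← inner_add_right]
    congr 1
    abel
  -- geometric identities
  have hG1 : ⟪zstar - zp, zp - zb⟫
      = (‖zstar - zb‖ ^ 2 - ‖zstar - zp‖ ^ 2 - ‖zp - zb‖ ^ 2) / 2 := by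
    have he : zstar - zb = (zstar - zp) + (zp - zb) := by abel
    rw [he, norm_add_sq_real]; ring
  have hG2 : ⟪zp - u, u - zb⟫ = (‖zp - zb‖ ^ 2 - ‖zp - u‖ ^ 2 - ‖u - zb‖ ^ 2) / 2 := by
    have he : zp - zb = (zp - u) + (u - zb) := by abel
    rw [he, norm_add_sq_real]; ring
  have hnrm1 : ‖zstar - zb‖ = Z := by rw [hZ, norm_sub_rev]
  have hnrm2 : ‖zstar - zp‖ = ‖zp - zstar‖ := norm_sub_rev _ _
  have hnrm3 : ‖zp - u‖ = P := by rw [hP, norm_sub_rev]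
  -- master inequality (M)
  have hM : ‖zp - zstar‖ ^ 2 + P ^ 2 + U ^ 2 + 2 * (γ * μ) * X ^ 2
      ≤ Z ^ 2 + 4 * (γ * L) * W * X + 2 * (γ * L) * P * W := by
    have hsum : 0 ≤ ⟪zstar - zp, zp - zb⟫ + ⟪zp - u, u - zb⟫
        + γ * (⟪zstar - zp, Fhat⟫ + ⟪zp - u, Favg wc⟫ + ⟪Favg zstar, u - zstar⟫) := by
      linarith [App1, App2, hVIr]
    rw [hT, hsplit] at hsum
    have hb1 : γ * (⟪u - zp, F i u - F i wc⟫
        - (⟪u - zstar, Favg u - Favg zstar⟫ + ⟪u - zstar, Fhat - Favg u⟫))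
        ≤ γ * (P * (L * W) - μ * X ^ 2 + 2 * L * W * X) := by
      apply mul_le_mul_of_nonneg_left _ hγ0.le
      linarith [hcs2, hFavgMono, hcs1]
    rw [hG1, hG2, hnrm1, hnrm2, hnrm3] at hsum
    linarith [hsum, hb1]
  -- triangle facts
  have hWtri : W ≤ U + (1 - 1 / ν) * dd := by
    have he : u - wc = (u - zb) + (zb - wc) := by abel
    have he2 : zb - wc = α • (zc - wc) := by rw [hzb]; module
    have h3 : ‖zb - wc‖ = α * dd := by
      rw [he2, norm_smul, Real.norm_eq_abs, abs_of_pos hα0, hdd]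
    calc W = ‖(u - zb) + (zb - wc)‖ := by rw [hW, ← he]
      _ ≤ ‖u - zb‖ + ‖zb - wc‖ := norm_add_le _ _
      _ = U + α * dd := by rw [hU, h3]
      _ = U + (1 - 1 / ν) * dd := by rw [hαν]
  have hZtri : Z ≤ X + U := by
    have he : zb - zstar = (zb - u) + (u - zstar) := by abel
    calc Z = ‖(zb - u) + (u - zstar)‖ := by rw [hZ, ← he]
      _ ≤ ‖zb - u‖ + ‖u - zstar‖ := norm_add_le _ _
      _ = U + X := by rw [hU, hX, norm_sub_rev]
      _ = X + U := by ring
  -- scalar step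
  have hscal := scalar_step ν κ U X P W Z dd hν2 hκ0 hκ1 (norm_nonneg _) (norm_nonneg _)
    (norm_nonneg _) (norm_nonneg _) (norm_nonneg _) (norm_nonneg _) hWtri hZtri
  rw [hβeq, hρeq] at hscal
  -- Z-decomposition
  have hZid : Z ^ 2 = α * ‖zc - zstar‖ ^ 2 + (1 - α) * ‖wc - zstar‖ ^ 2
      - α * (1 - α) * dd ^ 2 := by
    set A : V := zc - zstar with hA
    set B : V := wc - zstar with hB
    have he : zb - zstar = α • A + (1 - α) • B := by rw [hzb, hA, hB]; module
    have he2 : zc - wc = A - B := by rw [hA, hB]; abel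
    have h1 : ‖α • A + (1 - α) • B‖ ^ 2
        = α ^ 2 * ‖A‖ ^ 2 + 2 * (α * (1 - α)) * ⟪A, B⟫ + (1 - α) ^ 2 * ‖B‖ ^ 2 := by
      rw [norm_add_sq_real, norm_smul, norm_smul, real_inner_smul_left, real_inner_smul_right,
        Real.norm_eq_abs, Real.norm_eq_abs, abs_of_pos hα0,
        abs_of_nonneg (by rw [h1α]; positivity : (0:ℝ) ≤ 1 - α)]
      ring
    have h2 : ‖A - B‖ ^ 2 = ‖A‖ ^ 2 - 2 * ⟪A, B⟫ + ‖B‖ ^ 2 := norm_sub_sq_real A B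
    rw [hZ, hdd, he, he2, h1, h2]
    ring
  -- final combination
  have hfin : ‖zp - zstar‖ ^ 2 ≤ (1 - 3 * (γ * μ) / 4) * Z ^ 2
      + ((1 - 3 * (γ * μ) / 4) * (1 - 1 / ν) * (1 / ν) - γ * μ * (1 / 2 - 3 / (4 * ν))) * dd ^ 2 := by
    linarith [hM, hscal]
  rw [hZid] at hfin
  have hcoef : (1 - 3 * (γ * μ) / 4) * (α * ‖zc - zstar‖ ^ 2 + (1 - α) * ‖wc - zstar‖ ^ 2
        - α * (1 - α) * dd ^ 2)
      + ((1 - 3 * (γ * μ) / 4) * (1 - 1 / ν) * (1 / ν) - γ * μ * (1 / 2 - 3 / (4 * ν))) * dd ^ 2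
      = (1 - 3 * (γ * μ) / 4) * (α * ‖zc - zstar‖ ^ 2 + (1 - α) * ‖wc - zstar‖ ^ 2)
        - γ * μ * (1 / 2 - 3 / (4 * ν)) * dd ^ 2 := by
    rw [hαν]; ring
  rw [hcoef] at hfin
  exact hfin

lemma step_coeff (ν ρ a b D : ℝ) (hν : 2 ≤ ν) (hρ : 0 ≤ ρ)
    (ha : 0 ≤ a) (hb : 0 ≤ b) (hD : 0 ≤ D) (hbad : b ≤ 2*a + 2*D) :
    (1 - 3*ρ/4) * ((1 - 1/ν)*a + (1/ν)*b) - ρ*(1/2 - 3/(4*ν))*D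
      + ((1/ν)*a + (1 - 1/ν)*b) ≤ (1 - ρ/4)*(a + b) := by
  have hν0 : (0:ℝ) < ν := by linarith
  have hq0 : 0 ≤ ρ*(1/2 - 3/(4*ν)) := by
    apply mul_nonneg hρ
    have : 3/(4*ν) ≤ 1/2 := by
      rw [div_le_div_iff₀ (by positivity) (by norm_num)]; linarith
    linarith
  have h1 : 0 ≤ ρ*(1/2 - 3/(4*ν)) * (2*a + 2*D - b) := mul_nonneg hq0 (by linarith)
  have h2 : 0 ≤ ρ*(1/ν)*b := by positivity
  have hid : (1 - ρ/4)*(a + b)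
      - ((1 - 3*ρ/4) * ((1 - 1/ν)*a + (1/ν)*b) - ρ*(1/2 - 3/(4*ν))*D + ((1/ν)*a + (1 - 1/ν)*b))
      = ρ*(1/2 - 3/(4*ν))*(2*a + 2*D - b)/2 + 3*(ρ*(1/ν)*b)/8 := by
    field_simp
    ring
  linarith [h1, h2, hid]

/-- Iteration complexity of the RR/SO Extragradient method with variance reduction for a
finite-sum variational inequality with `L`-Lipschitz, `μ`-strongly monotone operators:
with `p = 1/n`, `α = 1 − 1/n`, stepsize `γ = (1−α)μ/(6L²) = μ/(6nL²)`, for every `ε > 0`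
one has `V_S^n ≤ ε` as soon as the total number of iterations `T = Sn` satisfies
`T ≥ (24nL²/μ²)·log(V_0^0/ε)`; hence `O(n(L²/μ²)log(1/ε))` iterations and oracle calls
suffice to reach `ε`-accuracy, where `V_s^t = E‖z_s^t − z*‖² + E‖ω_s^t − z*‖²`.
Here (RR version) each epoch
`s` draws an independent uniform permutation `π_s` and performs
`z̄_s^t = αz_s^t + (1−α)ω_s^t`, `z_s^{t+1/2} = prox_{γg}(z̄_s^t − γF(ω_s^t))`,
`F̂ = F_{π_s(t)}(z_s^{t+1/2}) − F_{π_s(t)}(ω_s^t) + F(ω_s^t)`,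
`z_s^{t+1} = prox_{γg}(z̄_s^t − γF̂)`, and `ω_s^{t+1} = z_s^t` with probability `p`
(else `ω_s^{t+1} = ω_s^t`), independently of everything else.
(The Bernoulli coin of probability `p = 1/n` is realized as a uniform variable on `Fin n`
hitting value `0`; the expectation is the uniform average over all the randomness.) -/
theorem rr_vr_extragradient_iteration_complexity
    (d n S : ℕ) (hn : 2 ≤ n) (hS : 0 < S)
    (L μ γ p α : ℝ) (hL : 0 < L) (hμ : 0 < μ)
    (hp : p = (n : ℝ)⁻¹) (hα : α = 1 - p)
    (hγ : γ = (1 - α) * μ / (6 * L ^ 2))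
    (F : Fin n → EuclideanSpace ℝ (Fin d) → EuclideanSpace ℝ (Fin d))
    (g : EuclideanSpace ℝ (Fin d) → EReal)
    (hg_bot : ∀ x, g x ≠ ⊥) (hg_top : ∃ x, g x ≠ ⊤)
    (hg_convex : ∀ (x y : EuclideanSpace ℝ (Fin d)) (a b : ℝ), 0 ≤ a → 0 ≤ b → a + b = 1 →
      g (a • x + b • y) ≤ (a : EReal) * g x + (b : EReal) * g y)
    (hg_lsc : LowerSemicontinuous g)
    (prox : EuclideanSpace ℝ (Fin d) → EuclideanSpace ℝ (Fin d))
    (hprox : ∀ x y : EuclideanSpace ℝ (Fin d),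
      (γ : EReal) * g (prox x) + ((‖prox x - x‖ ^ 2 / 2 : ℝ) : EReal)
        ≤ (γ : EReal) * g y + ((‖y - x‖ ^ 2 / 2 : ℝ) : EReal))
    (hLip : ∀ (i : Fin n) (z₁ z₂ : EuclideanSpace ℝ (Fin d)),
      ‖F i z₁ - F i z₂‖ ≤ L * ‖z₁ - z₂‖)
    (hmono : ∀ (i : Fin n) (z₁ z₂ : EuclideanSpace ℝ (Fin d)),
      μ * ‖z₁ - z₂‖ ^ 2 ≤ ⟪F i z₁ - F i z₂, z₁ - z₂⟫)
    (zstar : EuclideanSpace ℝ (Fin d))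
    (hVI : ∀ z, g zstar ≤ ((⟪(n : ℝ)⁻¹ • ∑ i, F i zstar, z - zstar⟫ : ℝ) : EReal) + g z)
    (start : EuclideanSpace ℝ (Fin d))
    (z zhalf w : (Fin S → Equiv.Perm (Fin n)) × (Fin S → Fin n → Fin n) →
      ℕ → ℕ → EuclideanSpace ℝ (Fin d))
    (hinit : ∀ ω, z ω 0 0 = start ∧ w ω 0 0 = start)
    (hhalf : ∀ ω, ∀ s, ∀ hs : s < S, ∀ t, ∀ ht : t < n,
      zhalf ω s t = prox ((α • z ω s t + (1 - α) • w ω s t)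
        - γ • ((n : ℝ)⁻¹ • ∑ i, F i (w ω s t))))
    (hstep : ∀ ω, ∀ s, ∀ hs : s < S, ∀ t, ∀ ht : t < n,
      z ω s (t + 1) = prox ((α • z ω s t + (1 - α) • w ω s t)
        - γ • (F (ω.1 ⟨s, hs⟩ ⟨t, ht⟩) (zhalf ω s t) - F (ω.1 ⟨s, hs⟩ ⟨t, ht⟩) (w ω s t)
            + (n : ℝ)⁻¹ • ∑ i, F i (w ω s t))))
    (hwstep : ∀ ω, ∀ s, ∀ hs : s < S, ∀ t, ∀ ht : t < n,
      w ω s (t + 1) = if (ω.2 ⟨s, hs⟩ ⟨t, ht⟩ : Fin n).1 = 0 then z ω s t else w ω s t)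
    (hepoch : ∀ ω, ∀ s, s + 1 ≤ S →
      z ω (s + 1) 0 = z ω s n ∧ w ω (s + 1) 0 = w ω s n) :
    ∀ ε : ℝ, 0 < ε →
      (24 * (n : ℝ) * L ^ 2 / μ ^ 2) *
          Real.log (((∑ ω : (Fin S → Equiv.Perm (Fin n)) × (Fin S → Fin n → Fin n),
              (‖z ω 0 0 - zstar‖ ^ 2 + ‖w ω 0 0 - zstar‖ ^ 2)) /
            (Fintype.card ((Fin S → Equiv.Perm (Fin n)) × (Fin S → Fin n → Fin n)) : ℝ)) / ε)
        ≤ ((S * n : ℕ) : ℝ) →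
      (∑ ω : (Fin S → Equiv.Perm (Fin n)) × (Fin S → Fin n → Fin n),
          (‖z ω (S - 1) n - zstar‖ ^ 2 + ‖w ω (S - 1) n - zstar‖ ^ 2)) /
          (Fintype.card ((Fin S → Equiv.Perm (Fin n)) × (Fin S → Fin n → Fin n)) : ℝ)
        ≤ ε := by
  intro ε hε
  intro hlog
  haveI : NeZero n := ⟨by omega⟩
  have hN0 : 0 < Fintype.card ((Fin S → Equiv.Perm (Fin n)) × (Fin S → Fin n → Fin n)) := Fintype.card_pos
  have hNR : (0:ℝ) < (Fintype.card ((Fin S → Equiv.Perm (Fin n)) × (Fin S → Fin n → Fin n)) : ℝ) := by exact_mod_cast hN0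
  -- trivial case d = 0
  rcases Nat.eq_zero_or_pos d with hd0 | hd
  · subst hd0
    haveI : Subsingleton (EuclideanSpace ℝ (Fin 0)) :=
      ⟨fun a b => PiLp.ext fun x => x.elim0⟩
    have hzero : ∀ ω : ((Fin S → Equiv.Perm (Fin n)) × (Fin S → Fin n → Fin n)), ‖z ω (S - 1) n - zstar‖ ^ 2 + ‖w ω (S - 1) n - zstar‖ ^ 2 = 0 := by
      intro ω
      rw [Subsingleton.elim (z ω (S - 1) n) zstar, Subsingleton.elim (w ω (S - 1) n) zstar,
        sub_self, norm_zero]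
      ring
    rw [Finset.sum_congr rfl (fun ω _ => hzero ω), Finset.sum_const, smul_zero, zero_div]
    exact hε.le
  -- now d ≥ 1 : derive μ ≤ L
  have hμL : μ ≤ L := by
    set e : EuclideanSpace ℝ (Fin d) := EuclideanSpace.single (⟨0, hd⟩ : Fin d) (1:ℝ) with he
    have hne : ‖e‖ = 1 := by rw [he, EuclideanSpace.norm_single, norm_one]
    have h1 := hmono ⟨0, by omega⟩ e 0
    have h2 := real_inner_le_norm (F ⟨0, by omega⟩ e - F ⟨0, by omega⟩ 0) (e - 0)
    have h3 := hLip ⟨0, by omega⟩ e 0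
    have h4 : ‖e - 0‖ = 1 := by rw [sub_zero, hne]
    rw [h4] at h1 h2 h3
    nlinarith [h1, h2, h3]
  have hν2 : (2 : ℝ) ≤ (n : ℝ) := by exact_mod_cast hn
  have hν0 : (0 : ℝ) < (n : ℝ) := by linarith
  have hα0 : 0 < α := by
    rw [hα, hp]
    have : (n:ℝ)⁻¹ ≤ 1/2 := by
      rw [inv_le_comm₀ hν0 (by norm_num)] <;> linarith
    linarith
  have h1α : 1 - α = (n:ℝ)⁻¹ := by rw [hα]; rw [hp]; ring
  have hγ0 : 0 < γ := by rw [hγ, h1α]; positivity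
  have hρ0 : 0 < γ * μ := mul_pos hγ0 hμ
  have hρval : γ * μ = μ^2 / (6 * (n:ℝ) * L^2) := by
    rw [hγ, h1α]; field_simp
  have hρ12 : γ * μ ≤ 1/12 := by
    rw [hρval]
    rw [div_le_div_iff₀ (by positivity) (by norm_num)]
    nlinarith [sq_nonneg μ, sq_nonneg L, mul_pos hL hL]
  -- contraction factor
  set c : ℝ := γ * μ / 4 with hc
  have hc0 : 0 < c := by positivity
  have hc1 : c ≤ 1/48 := by rw [hc]; linarith
  have h1c0 : 0 ≤ 1 - c := by linarith
  have h1c1 : 1 - c ≤ 1 := by linarith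
  -- deterministic z-step bound
  have zstepineq : ∀ s (hs : s < S) t (ht : t < n) (ω : ((Fin S → Equiv.Perm (Fin n)) × (Fin S → Fin n → Fin n))),
      ‖z ω s (t+1) - zstar‖^2
        ≤ (1 - 3*(γ*μ)/4) * (α*‖z ω s t - zstar‖^2 + (1-α)*‖w ω s t - zstar‖^2)
          - γ*μ*(1/2 - 3/(4*(n:ℝ)))*‖z ω s t - w ω s t‖^2 := by
    intro s hs t ht ω
    exact one_step n hn L μ γ p α hL hμ hμL hp hα hγ F g hg_bot hg_top hg_convex prox hprox
      hLip hmono zstar hVI (z ω s t) (w ω s t) (zhalf ω s t) (z ω s (t+1))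
      (ω.1 ⟨s, hs⟩ ⟨t, ht⟩) (hhalf ω s hs t ht) (hstep ω s hs t ht)
  -- independence of z, w from later coins
  have indep : ∀ (s t : ℕ), s < S → t ≤ n → ∀ ω ω' : ((Fin S → Equiv.Perm (Fin n)) × (Fin S → Fin n → Fin n)), ω.1 = ω'.1 →
      (∀ (s' t' : ℕ) (hs' : s' < S) (ht' : t' < n),
        (s' < s ∨ (s' = s ∧ t' < t)) → ω.2 ⟨s', hs'⟩ ⟨t', ht'⟩ = ω'.2 ⟨s', hs'⟩ ⟨t', ht'⟩) →
      z ω s t = z ω' s t ∧ w ω s t = w ω' s t := by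
    intro s
    induction s with
    | zero =>
      intro t
      induction t with
      | zero =>
        intro _ _ ω ω' h1 _
        exact ⟨by rw [(hinit ω).1, (hinit ω').1], by rw [(hinit ω).2, (hinit ω').2]⟩
      | succ t iht =>
        intro hs ht ω ω' h1 h2
        have htn : t < n := by omega
        have ih := iht hs (by omega) ω ω' h1
          (fun s' t' hs' ht' hlt => h2 s' t' hs' ht'
            (hlt.imp id (fun hx => ⟨hx.1, by omega⟩)))
        refine ⟨?_, ?_⟩
        · rw [hstep ω 0 hs t htn, hstep ω' 0 hs t htn, hhalf ω 0 hs t htn,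
            hhalf ω' 0 hs t htn, ih.1, ih.2, h1]
        · rw [hwstep ω 0 hs t htn, hwstep ω' 0 hs t htn, ih.1, ih.2,
            h2 0 t hs htn (Or.inr ⟨rfl, by omega⟩)]
    | succ s ihs =>
      intro t
      induction t with
      | zero =>
        intro hs ht ω ω' h1 h2
        have hsS : s < S := by omega
        have ih := ihs n hsS le_rfl ω ω' h1
          (fun s' t' hs' ht' hlt => h2 s' t' hs' ht'
            (Or.inl (by rcases hlt with h | ⟨h, _⟩ <;> omega)))
        exact ⟨by rw [(hepoch ω s (by omega)).1, (hepoch ω' s (by omega)).1, ih.1],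
          by rw [(hepoch ω s (by omega)).2, (hepoch ω' s (by omega)).2, ih.2]⟩
      | succ t iht =>
        intro hs ht ω ω' h1 h2
        have htn : t < n := by omega
        have ih := iht hs (by omega) ω ω' h1
          (fun s' t' hs' ht' hlt => h2 s' t' hs' ht'
            (hlt.imp id (fun hx => ⟨hx.1, by omega⟩)))
        refine ⟨?_, ?_⟩
        · rw [hstep ω (s+1) hs t htn, hstep ω' (s+1) hs t htn, hhalf ω (s+1) hs t htn,
            hhalf ω' (s+1) hs t htn, ih.1, ih.2, h1]
        · rw [hwstep ω (s+1) hs t htn, hwstep ω' (s+1) hs t htn, ih.1, ih.2,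
            h2 (s+1) t hs htn (Or.inr ⟨rfl, by omega⟩)]
  -- coin expectation split
  have coin : ∀ s (hs : s < S) t (ht : t < n),
      (n:ℝ) * (∑ ω : ((Fin S → Equiv.Perm (Fin n)) × (Fin S → Fin n → Fin n)), ‖w ω s (t+1) - zstar‖^2)
        = (∑ ω : ((Fin S → Equiv.Perm (Fin n)) × (Fin S → Fin n → Fin n)), ‖z ω s t - zstar‖^2)
          + ((n:ℝ) - 1) * (∑ ω : ((Fin S → Equiv.Perm (Fin n)) × (Fin S → Fin n → Fin n)), ‖w ω s t - zstar‖^2) := by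
    intro s hs t ht
    have hδ : ∀ j : Fin n, ∃ δ : Fin S → Fin n → Fin n,
        (δ ⟨s, hs⟩ ⟨t, ht⟩ = j) ∧ ∀ (s' t' : ℕ) (hs' : s' < S) (ht' : t' < n),
          (s' < s ∨ (s' = s ∧ t' < t)) → δ ⟨s', hs'⟩ ⟨t', ht'⟩ = 0 := by
      intro j
      refine ⟨fun a b => if a = ⟨s, hs⟩ ∧ b = ⟨t, ht⟩ then j else 0, by simp, ?_⟩
      intro s' t' hs' ht' hlt
      have hne : ¬((⟨s', hs'⟩ : Fin S) = ⟨s, hs⟩ ∧ (⟨t', ht'⟩ : Fin n) = ⟨t, ht⟩) := by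
        rintro ⟨ha, hb⟩
        rw [Fin.mk.injEq] at ha hb
        rcases hlt with h | ⟨h, h'⟩ <;> omega
      simp only [hne, if_false]
    choose δ hδ1 hδ2 using hδ
    set ej : Fin n → (((Fin S → Equiv.Perm (Fin n)) × (Fin S → Fin n → Fin n)) ≃ ((Fin S → Equiv.Perm (Fin n)) × (Fin S → Fin n → Fin n))) :=
      fun j => Equiv.prodCongr (Equiv.refl _) (Equiv.addRight (δ j)) with hej
    have hejapp : ∀ (j : Fin n) ω, (ej j ω) = (ω.1, ω.2 + δ j) := fun j ω => rfl
    -- change of coordinates does not affect z, w at (s,t)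
    have hinv : ∀ (j : Fin n) ω,
        z (ej j ω) s t = z ω s t ∧ w (ej j ω) s t = w ω s t := by
      intro j ω
      apply indep s t hs ht.le
      · rfl
      · intro s' t' hs' ht' hlt
        show (ω.2 + δ j) ⟨s', hs'⟩ ⟨t', ht'⟩ = ω.2 ⟨s', hs'⟩ ⟨t', ht'⟩
        show ω.2 ⟨s', hs'⟩ ⟨t', ht'⟩ + δ j ⟨s', hs'⟩ ⟨t', ht'⟩ = ω.2 ⟨s', hs'⟩ ⟨t', ht'⟩
        rw [hδ2 j s' t' hs' ht' hlt, add_zero]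
    -- per-ω inner sum over j
    have hper : ∀ ω : ((Fin S → Equiv.Perm (Fin n)) × (Fin S → Fin n → Fin n)),
        ∑ j : Fin n, ‖w (ej j ω) s (t+1) - zstar‖^2
        = ‖z ω s t - zstar‖^2 + ((n:ℝ) - 1) * ‖w ω s t - zstar‖^2 := by
      intro ω
      have hterm : ∀ j : Fin n, ‖w (ej j ω) s (t+1) - zstar‖^2
          = if (ω.2 ⟨s, hs⟩ ⟨t, ht⟩ + j : Fin n) = 0 then ‖z ω s t - zstar‖^2
            else ‖w ω s t - zstar‖^2 := by
        intro j
        have hcoordeq : ((ej j ω).2 ⟨s, hs⟩ ⟨t, ht⟩) = ω.2 ⟨s, hs⟩ ⟨t, ht⟩ + j := by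
          rw [hejapp]
          show ω.2 ⟨s, hs⟩ ⟨t, ht⟩ + δ j ⟨s, hs⟩ ⟨t, ht⟩ = _
          rw [hδ1]
        have hw' : w (ej j ω) s (t+1)
            = if (ω.2 ⟨s, hs⟩ ⟨t, ht⟩ + j : Fin n) = 0 then z ω s t else w ω s t := by
          rw [hwstep (ej j ω) s hs t ht, (hinv j ω).1, (hinv j ω).2]
          refine if_congr ?_ rfl rfl
          rw [hcoordeq]
          exact Fin.val_eq_zero_iff
        rw [hw']
        exact apply_ite (fun v => ‖v - zstar‖^2) _ _ _
      rw [Finset.sum_congr rfl (fun j _ => hterm j)]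
      have hreind := Equiv.sum_comp (Equiv.addLeft (ω.2 ⟨s, hs⟩ ⟨t, ht⟩))
        (fun k : Fin n => if k = 0 then ‖z ω s t - zstar‖^2 else ‖w ω s t - zstar‖^2)
      simp only [Equiv.coe_addLeft] at hreind
      refine Eq.trans hreind ?_
      have hsplit : ∀ k : Fin n, (if k = (0 : Fin n)
            then ‖z ω s t - zstar‖^2 else ‖w ω s t - zstar‖^2)
          = ‖w ω s t - zstar‖^2 + (if k = (0 : Fin n)
            then ‖z ω s t - zstar‖^2 - ‖w ω s t - zstar‖^2 else 0) := by
        intro k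
        split <;> ring
      rw [Finset.sum_congr rfl (fun k _ => hsplit k), Finset.sum_add_distrib,
        Finset.sum_const, Finset.card_univ, Fintype.card_fin, nsmul_eq_mul,
        Fintype.sum_ite_eq' (0 : Fin n)
          (fun _ => ‖z ω s t - zstar‖^2 - ‖w ω s t - zstar‖^2)]
      ring
    -- assemble
    calc (n:ℝ) * (∑ ω : ((Fin S → Equiv.Perm (Fin n)) × (Fin S → Fin n → Fin n)), ‖w ω s (t+1) - zstar‖^2)
        = ∑ _j : Fin n, ∑ ω : ((Fin S → Equiv.Perm (Fin n)) × (Fin S → Fin n → Fin n)), ‖w ω s (t+1) - zstar‖^2 := by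
          rw [Finset.sum_const, Finset.card_univ, Fintype.card_fin, nsmul_eq_mul]
      _ = ∑ j : Fin n, ∑ ω : ((Fin S → Equiv.Perm (Fin n)) × (Fin S → Fin n → Fin n)), ‖w (ej j ω) s (t+1) - zstar‖^2 := by
          refine Finset.sum_congr rfl (fun j _ => ?_)
          exact (Equiv.sum_comp (ej j) (fun ω => ‖w ω s (t+1) - zstar‖^2)).symm
      _ = ∑ ω : ((Fin S → Equiv.Perm (Fin n)) × (Fin S → Fin n → Fin n)), ∑ j : Fin n, ‖w (ej j ω) s (t+1) - zstar‖^2 := Finset.sum_comm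
      _ = ∑ ω : ((Fin S → Equiv.Perm (Fin n)) × (Fin S → Fin n → Fin n)), (‖z ω s t - zstar‖^2 + ((n:ℝ) - 1) * ‖w ω s t - zstar‖^2) :=
          Finset.sum_congr rfl (fun ω _ => hper ω)
      _ = _ := by
          rw [Finset.sum_add_distrib, Finset.mul_sum]
  -- one-step contraction of the Lyapunov sum
  have hαν' : α = 1 - (n:ℝ)⁻¹ := by rw [hα, hp]
  have step : ∀ s (hs : s < S) t (ht : t < n),
      (∑ ω : ((Fin S → Equiv.Perm (Fin n)) × (Fin S → Fin n → Fin n)),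
          (‖z ω s (t+1) - zstar‖^2 + ‖w ω s (t+1) - zstar‖^2))
        ≤ (1 - c) * (∑ ω : ((Fin S → Equiv.Perm (Fin n)) × (Fin S → Fin n → Fin n)),
          (‖z ω s t - zstar‖^2 + ‖w ω s t - zstar‖^2)) := by
    intro s hs t ht
    have hz : (∑ ω : ((Fin S → Equiv.Perm (Fin n)) × (Fin S → Fin n → Fin n)), ‖z ω s (t+1) - zstar‖^2)
        ≤ ∑ ω : ((Fin S → Equiv.Perm (Fin n)) × (Fin S → Fin n → Fin n)),
          ((1 - 3*(γ*μ)/4) * (α*‖z ω s t - zstar‖^2 + (1-α)*‖w ω s t - zstar‖^2)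
            - γ*μ*(1/2 - 3/(4*(n:ℝ)))*‖z ω s t - w ω s t‖^2) :=
      Finset.sum_le_sum (fun ω _ => zstepineq s hs t ht ω)
    have hw : (∑ ω : ((Fin S → Equiv.Perm (Fin n)) × (Fin S → Fin n → Fin n)), ‖w ω s (t+1) - zstar‖^2)
        = ∑ ω : ((Fin S → Equiv.Perm (Fin n)) × (Fin S → Fin n → Fin n)),
          ((n:ℝ)⁻¹ * ‖z ω s t - zstar‖^2 + (1 - (n:ℝ)⁻¹) * ‖w ω s t - zstar‖^2) := by
      have hcoin := coin s hs t ht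
      have hne : (n:ℝ) ≠ 0 := ne_of_gt hν0
      rw [Finset.sum_add_distrib, ← Finset.mul_sum, ← Finset.mul_sum]
      field_simp
      linarith [hcoin]
    have hpt : ∀ ω : ((Fin S → Equiv.Perm (Fin n)) × (Fin S → Fin n → Fin n)),
        ((1 - 3*(γ*μ)/4) * (α*‖z ω s t - zstar‖^2 + (1-α)*‖w ω s t - zstar‖^2)
          - γ*μ*(1/2 - 3/(4*(n:ℝ)))*‖z ω s t - w ω s t‖^2)
        + ((n:ℝ)⁻¹ * ‖z ω s t - zstar‖^2 + (1 - (n:ℝ)⁻¹) * ‖w ω s t - zstar‖^2)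
        ≤ (1 - c) * (‖z ω s t - zstar‖^2 + ‖w ω s t - zstar‖^2) := by
      intro ω
      have hb2 : ‖w ω s t - zstar‖^2 ≤ 2*‖z ω s t - zstar‖^2 + 2*‖z ω s t - w ω s t‖^2 := by
        have he : w ω s t - zstar = (z ω s t - zstar) - (z ω s t - w ω s t) := by abel
        rw [he]
        nlinarith [norm_sub_le (z ω s t - zstar) (z ω s t - w ω s t),
          norm_nonneg (z ω s t - zstar), norm_nonneg (z ω s t - w ω s t),
          norm_nonneg ((z ω s t - zstar) - (z ω s t - w ω s t)),
          sq_nonneg (‖z ω s t - zstar‖ - ‖z ω s t - w ω s t‖)]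
      have hsc := step_coeff (n:ℝ) (γ*μ) (‖z ω s t - zstar‖^2) (‖w ω s t - zstar‖^2)
        (‖z ω s t - w ω s t‖^2) hν2 hρ0.le (sq_nonneg _) (sq_nonneg _) (sq_nonneg _) hb2
      rw [hαν']
      have h1ν : (1:ℝ)/(n:ℝ) = (n:ℝ)⁻¹ := one_div _
      rw [h1ν] at hsc
      rw [hc]
      linarith [hsc]
    calc (∑ ω : ((Fin S → Equiv.Perm (Fin n)) × (Fin S → Fin n → Fin n)),
          (‖z ω s (t+1) - zstar‖^2 + ‖w ω s (t+1) - zstar‖^2))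
        = (∑ ω : ((Fin S → Equiv.Perm (Fin n)) × (Fin S → Fin n → Fin n)), ‖z ω s (t+1) - zstar‖^2)
          + (∑ ω : ((Fin S → Equiv.Perm (Fin n)) × (Fin S → Fin n → Fin n)), ‖w ω s (t+1) - zstar‖^2) :=
          Finset.sum_add_distrib
      _ ≤ (∑ ω : ((Fin S → Equiv.Perm (Fin n)) × (Fin S → Fin n → Fin n)),
            ((1 - 3*(γ*μ)/4) * (α*‖z ω s t - zstar‖^2 + (1-α)*‖w ω s t - zstar‖^2)
              - γ*μ*(1/2 - 3/(4*(n:ℝ)))*‖z ω s t - w ω s t‖^2))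
          + (∑ ω : ((Fin S → Equiv.Perm (Fin n)) × (Fin S → Fin n → Fin n)),
            ((n:ℝ)⁻¹ * ‖z ω s t - zstar‖^2 + (1 - (n:ℝ)⁻¹) * ‖w ω s t - zstar‖^2)) := by
          rw [← hw]; exact add_le_add_left hz _
      _ = ∑ ω : ((Fin S → Equiv.Perm (Fin n)) × (Fin S → Fin n → Fin n)),
            (((1 - 3*(γ*μ)/4) * (α*‖z ω s t - zstar‖^2 + (1-α)*‖w ω s t - zstar‖^2)
              - γ*μ*(1/2 - 3/(4*(n:ℝ)))*‖z ω s t - w ω s t‖^2)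
            + ((n:ℝ)⁻¹ * ‖z ω s t - zstar‖^2 + (1 - (n:ℝ)⁻¹) * ‖w ω s t - zstar‖^2)) :=
          Finset.sum_add_distrib.symm
      _ ≤ ∑ ω : ((Fin S → Equiv.Perm (Fin n)) × (Fin S → Fin n → Fin n)),
            (1 - c) * (‖z ω s t - zstar‖^2 + ‖w ω s t - zstar‖^2) :=
          Finset.sum_le_sum (fun ω _ => hpt ω)
      _ = _ := by rw [Finset.mul_sum]
  -- within-epoch telescoping
  have intra : ∀ s (hs : s < S) (t : ℕ), t ≤ n →
      (∑ ω : ((Fin S → Equiv.Perm (Fin n)) × (Fin S → Fin n → Fin n)),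
          (‖z ω s t - zstar‖^2 + ‖w ω s t - zstar‖^2))
        ≤ (1-c)^t * (∑ ω : ((Fin S → Equiv.Perm (Fin n)) × (Fin S → Fin n → Fin n)),
          (‖z ω s 0 - zstar‖^2 + ‖w ω s 0 - zstar‖^2)) := by
    intro s hs t
    induction t with
    | zero => intro _; simp
    | succ t iht =>
      intro ht
      have h1 := step s hs t (by omega)
      have h2 := iht (by omega)
      calc (∑ ω : ((Fin S → Equiv.Perm (Fin n)) × (Fin S → Fin n → Fin n)),
            (‖z ω s (t+1) - zstar‖^2 + ‖w ω s (t+1) - zstar‖^2))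
          ≤ (1-c) * (∑ ω : ((Fin S → Equiv.Perm (Fin n)) × (Fin S → Fin n → Fin n)),
            (‖z ω s t - zstar‖^2 + ‖w ω s t - zstar‖^2)) := h1
        _ ≤ (1-c) * ((1-c)^t * (∑ ω : ((Fin S → Equiv.Perm (Fin n)) × (Fin S → Fin n → Fin n)),
            (‖z ω s 0 - zstar‖^2 + ‖w ω s 0 - zstar‖^2))) :=
            mul_le_mul_of_nonneg_left h2 h1c0
        _ = (1-c)^(t+1) * (∑ ω : ((Fin S → Equiv.Perm (Fin n)) × (Fin S → Fin n → Fin n)),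
            (‖z ω s 0 - zstar‖^2 + ‖w ω s 0 - zstar‖^2)) := by rw [pow_succ]; ring
  -- epoch chaining
  have epochs : ∀ s, s < S →
      (∑ ω : ((Fin S → Equiv.Perm (Fin n)) × (Fin S → Fin n → Fin n)),
          (‖z ω s n - zstar‖^2 + ‖w ω s n - zstar‖^2))
        ≤ (1-c)^((s+1)*n) * (∑ ω : ((Fin S → Equiv.Perm (Fin n)) × (Fin S → Fin n → Fin n)),
          (‖z ω 0 0 - zstar‖^2 + ‖w ω 0 0 - zstar‖^2)) := by
    intro s
    induction s with
    | zero =>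
      intro hs
      rw [show (0+1)*n = n from by ring]
      exact intra 0 hs n le_rfl
    | succ s ihs =>
      intro hs
      have hsS : s < S := by omega
      have h0 : (∑ ω : ((Fin S → Equiv.Perm (Fin n)) × (Fin S → Fin n → Fin n)),
            (‖z ω (s+1) 0 - zstar‖^2 + ‖w ω (s+1) 0 - zstar‖^2))
          = ∑ ω : ((Fin S → Equiv.Perm (Fin n)) × (Fin S → Fin n → Fin n)),
            (‖z ω s n - zstar‖^2 + ‖w ω s n - zstar‖^2) :=
        Finset.sum_congr rfl (fun ω _ => by
          rw [(hepoch ω s (by omega)).1, (hepoch ω s (by omega)).2])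
      calc (∑ ω : ((Fin S → Equiv.Perm (Fin n)) × (Fin S → Fin n → Fin n)),
            (‖z ω (s+1) n - zstar‖^2 + ‖w ω (s+1) n - zstar‖^2))
          ≤ (1-c)^n * (∑ ω : ((Fin S → Equiv.Perm (Fin n)) × (Fin S → Fin n → Fin n)),
            (‖z ω (s+1) 0 - zstar‖^2 + ‖w ω (s+1) 0 - zstar‖^2)) := intra (s+1) hs n le_rfl
        _ = (1-c)^n * (∑ ω : ((Fin S → Equiv.Perm (Fin n)) × (Fin S → Fin n → Fin n)),
            (‖z ω s n - zstar‖^2 + ‖w ω s n - zstar‖^2)) := by rw [h0]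
        _ ≤ (1-c)^n * ((1-c)^((s+1)*n) * (∑ ω : ((Fin S → Equiv.Perm (Fin n)) × (Fin S → Fin n → Fin n)),
            (‖z ω 0 0 - zstar‖^2 + ‖w ω 0 0 - zstar‖^2))) :=
            mul_le_mul_of_nonneg_left (ihs hsS) (pow_nonneg h1c0 n)
        _ = (1-c)^((s+1+1)*n) * (∑ ω : ((Fin S → Equiv.Perm (Fin n)) × (Fin S → Fin n → Fin n)),
            (‖z ω 0 0 - zstar‖^2 + ‖w ω 0 0 - zstar‖^2)) := by
            rw [← mul_assoc, ← pow_add, show n + (s+1)*n = (s+1+1)*n from by ring]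
  have hfinal : (∑ ω : ((Fin S → Equiv.Perm (Fin n)) × (Fin S → Fin n → Fin n)),
        (‖z ω (S-1) n - zstar‖^2 + ‖w ω (S-1) n - zstar‖^2))
      ≤ (1-c)^(S*n) * (∑ ω : ((Fin S → Equiv.Perm (Fin n)) × (Fin S → Fin n → Fin n)),
        (‖z ω 0 0 - zstar‖^2 + ‖w ω 0 0 - zstar‖^2)) := by
    have h := epochs (S-1) (by omega)
    rwa [show (S-1+1) = S from by omega] at h
  -- final numeric argument
  set N : ℝ := (Fintype.card ((Fin S → Equiv.Perm (Fin n)) × (Fin S → Fin n → Fin n)) : ℝ) with hNdef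
  set V0 : ℝ := (∑ ω : ((Fin S → Equiv.Perm (Fin n)) × (Fin S → Fin n → Fin n)),
      (‖z ω 0 0 - zstar‖^2 + ‖w ω 0 0 - zstar‖^2)) / N with hV0def
  set VT : ℝ := (∑ ω : ((Fin S → Equiv.Perm (Fin n)) × (Fin S → Fin n → Fin n)),
      (‖z ω (S-1) n - zstar‖^2 + ‖w ω (S-1) n - zstar‖^2)) / N with hVTdef
  have hV0nn : 0 ≤ V0 := by
    rw [hV0def]
    apply div_nonneg _ hNR.le
    exact Finset.sum_nonneg (fun ω _ => by positivity)
  have hVTV0 : VT ≤ (1-c)^(S*n) * V0 := by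
    rw [hVTdef, hV0def, ← mul_div_assoc]
    exact (div_le_div_iff_of_pos_right hNR).2 hfinal
  show VT ≤ ε
  by_cases hV0ε : V0 ≤ ε
  · have h1 : (1-c)^(S*n) ≤ 1 := pow_le_one₀ h1c0 h1c1
    calc VT ≤ (1-c)^(S*n) * V0 := hVTV0
      _ ≤ 1 * V0 := mul_le_mul_of_nonneg_right h1 hV0nn
      _ ≤ ε := by linarith
  · push_neg at hV0ε
    have hV0pos : 0 < V0 := lt_trans hε hV0ε
    have hlogpos : 0 < Real.log (V0/ε) := Real.log_pos ((one_lt_div hε).2 hV0ε)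
    have hcinv : 24 * (n:ℝ) * L^2 / μ^2 = 1/c := by
      rw [hc, hρval]
      field_simp
      ring
    have hcT : Real.log (V0/ε) ≤ c * ((S*n : ℕ) : ℝ) := by
      rw [hcinv, one_div] at hlog
      have := mul_le_mul_of_nonneg_left hlog hc0.le
      rw [← mul_assoc, mul_inv_cancel₀ (ne_of_gt hc0), one_mul] at this
      exact this
    have hexp1 : (1-c)^(S*n) ≤ Real.exp (-(c * ((S*n : ℕ) : ℝ))) := by
      have h1 : 1 - c ≤ Real.exp (-c) := by
        have := Real.add_one_le_exp (-c)
        linarith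
      calc (1-c)^(S*n) ≤ (Real.exp (-c))^(S*n) := pow_le_pow_left₀ h1c0 h1 _
        _ = Real.exp (-(c * ((S*n : ℕ) : ℝ))) := by
            rw [← Real.exp_nat_mul]
            congr 1
            ring
    have hexp2 : Real.exp (-(c * ((S*n : ℕ) : ℝ))) ≤ ε / V0 := by
      have h1 : -(c * ((S*n : ℕ) : ℝ)) ≤ Real.log (ε / V0) := by
        rw [show ε / V0 = (V0/ε)⁻¹ from (inv_div V0 ε).symm, Real.log_inv]
        linarith
      calc Real.exp (-(c * ((S*n : ℕ) : ℝ))) ≤ Real.exp (Real.log (ε / V0)) :=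
            Real.exp_le_exp.2 h1
        _ = ε / V0 := Real.exp_log (div_pos hε hV0pos)
    calc VT ≤ (1-c)^(S*n) * V0 := hVTV0
      _ ≤ (ε / V0) * V0 := mul_le_mul_of_nonneg_right (hexp1.trans hexp2) hV0nn
      _ = ε := div_mul_cancel₀ ε (ne_of_gt hV0pos)
end

section
/- Let g : ℝ^d → ℝ ∪ {+∞} be proper convex lower semicontinuous, let G : ℝ^d → ℝ^d be L-Lipschitz, and let γ > 0. Given z ∈ ℝ^d, define the extragradient step z^{1/2} = prox_{γg}(z − γ G(z)) and z⁺ = prox_{γg}(z − γ G(z^{1/2})). Then for every u ∈ ℝ^d with g(u) < +∞: ‖z⁺ − u‖² ≤ ‖z − u‖² + (γ²L² − 1)‖z^{1/2} − z‖² − 2γ( ⟨G(z^{1/2}), z^{1/2} − u⟩ + g(z^{1/2}) − g(u) ). -/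
open scoped RealInnerProductSpace

/-- Three-point inequality for the prox operator, real-valued version. -/
lemma prox_three_point_aux (d : ℕ) (γ : ℝ) (hγ : 0 < γ)
    (g : EuclideanSpace ℝ (Fin d) → EReal)
    (hg_bot : ∀ x, g x ≠ ⊥)
    (hg_convex : ∀ (x y : EuclideanSpace ℝ (Fin d)) (a b : ℝ), 0 ≤ a → 0 ≤ b → a + b = 1 →
      g (a • x + b • y) ≤ (a : EReal) * g x + (b : EReal) * g y)
    (prox : EuclideanSpace ℝ (Fin d) → EuclideanSpace ℝ (Fin d))
    (hprox : ∀ x y : EuclideanSpace ℝ (Fin d),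
      (γ : EReal) * g (prox x) + ((‖prox x - x‖ ^ 2 / 2 : ℝ) : EReal)
        ≤ (γ : EReal) * g y + ((‖y - x‖ ^ 2 / 2 : ℝ) : EReal))
    (x y : EuclideanSpace ℝ (Fin d)) (a b : ℝ)
    (hp : g (prox x) = (a : EReal)) (hy : g y = (b : EReal)) :
    γ * (a - b) ≤ ⟪prox x - x, y - prox x⟫ := by
  set p := prox x with hpdef
  have key : ∀ t : ℝ, 0 < t → t ≤ 1 →
      γ * (a - b) ≤ ⟪p - x, y - p⟫ + t * (‖y - p‖ ^ 2 / 2) := by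
    intro t ht ht1
    set yt : EuclideanSpace ℝ (Fin d) := (1 - t) • p + t • y with hyt
    have hconv := hg_convex p y (1 - t) t (by linarith) ht.le (by ring)
    rw [hp, hy, ← EReal.coe_mul, ← EReal.coe_mul, ← EReal.coe_add] at hconv
    have hytbot := hg_bot yt
    have hyttop : g yt ≠ ⊤ := ne_top_of_le_ne_top (EReal.coe_ne_top _) hconv
    set c : ℝ := (g yt).toReal with hc
    have hgc : g yt = (c : EReal) := (EReal.coe_toReal hyttop hytbot).symm
    rw [hgc] at hconv
    have hcle : c ≤ (1 - t) * a + t * b := EReal.coe_le_coe_iff.mp hconv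
    have hP := hprox x yt
    rw [hp, hgc, ← EReal.coe_mul, ← EReal.coe_mul, ← EReal.coe_add, ← EReal.coe_add] at hP
    have hPr : γ * a + ‖p - x‖ ^ 2 / 2 ≤ γ * c + ‖yt - x‖ ^ 2 / 2 :=
      EReal.coe_le_coe_iff.mp hP
    have hytx : yt - x = (p - x) + t • (y - p) := by
      rw [hyt]; module
    have hnorm : ‖yt - x‖ ^ 2 = ‖p - x‖ ^ 2 + 2 * t * ⟪p - x, y - p⟫ + t ^ 2 * ‖y - p‖ ^ 2 := by
      rw [hytx, norm_add_sq_real, real_inner_smul_right, norm_smul]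
      simp [Real.norm_eq_abs, mul_pow, sq_abs]
      ring
    have h2 : γ * t * (a - b) ≤ t * ⟪p - x, y - p⟫ + t ^ 2 * (‖y - p‖ ^ 2 / 2) := by
      nlinarith [mul_le_mul_of_nonneg_left hcle hγ.le]
    have := (mul_le_mul_iff_right₀ ht).mp
      (by nlinarith : t * (γ * (a - b)) ≤ t * (⟪p - x, y - p⟫ + t * (‖y - p‖ ^ 2 / 2)))
    linarith
  apply le_of_forall_pos_le_add
  intro ε hε
  set K : ℝ := ‖y - p‖ ^ 2 / 2 with hK
  have hK0 : 0 ≤ K := by positivity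
  set t : ℝ := min 1 (ε / (K + 1)) with htdef
  have ht0 : 0 < t := lt_min one_pos (by positivity)
  have ht1 : t ≤ 1 := min_le_left _ _
  have htK : t * K ≤ ε := by
    have h1 : t ≤ ε / (K + 1) := min_le_right _ _
    have : t * K ≤ (ε / (K + 1)) * (K + 1) := by nlinarith
    rw [div_mul_cancel₀ _ (by positivity : K + 1 ≠ 0)] at this; linarith
  linarith [key t ht0 ht1]

/-- One extragradient step with a proper convex lsc `g` and an `L`-Lipschitz operator `G`:
for `z½ = prox_{γg}(z − γG(z))`, `z⁺ = prox_{γg}(z − γG(z½))` and any `u` with `g(u) < +∞`,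
`‖z⁺ − u‖² ≤ ‖z − u‖² + (γ²L² − 1)‖z½ − z‖² − 2γ(⟨G(z½), z½ − u⟩ + g(z½) − g(u))`
(stated in the equivalent rearranged form avoiding `EReal` subtraction). -/
theorem extragradient_one_step_inequality
    (d : ℕ) (L γ : ℝ) (hγ : 0 < γ)
    (g : EuclideanSpace ℝ (Fin d) → EReal)
    (hg_bot : ∀ x, g x ≠ ⊥) (hg_top : ∃ x, g x ≠ ⊤)
    (hg_convex : ∀ (x y : EuclideanSpace ℝ (Fin d)) (a b : ℝ), 0 ≤ a → 0 ≤ b → a + b = 1 →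
      g (a • x + b • y) ≤ (a : EReal) * g x + (b : EReal) * g y)
    (hg_lsc : LowerSemicontinuous g)
    (prox : EuclideanSpace ℝ (Fin d) → EuclideanSpace ℝ (Fin d))
    (hprox : ∀ x y : EuclideanSpace ℝ (Fin d),
      (γ : EReal) * g (prox x) + ((‖prox x - x‖ ^ 2 / 2 : ℝ) : EReal)
        ≤ (γ : EReal) * g y + ((‖y - x‖ ^ 2 / 2 : ℝ) : EReal))
    (G : EuclideanSpace ℝ (Fin d) → EuclideanSpace ℝ (Fin d))
    (hGLip : ∀ z₁ z₂ : EuclideanSpace ℝ (Fin d), ‖G z₁ - G z₂‖ ≤ L * ‖z₁ - z₂‖)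
    (z zhalf zplus u : EuclideanSpace ℝ (Fin d))
    (hzhalf : zhalf = prox (z - γ • G z))
    (hzplus : zplus = prox (z - γ • G zhalf))
    (hu : g u ≠ ⊤) :
    ((‖zplus - u‖ ^ 2 + 2 * γ * ⟪G zhalf, zhalf - u⟫ : ℝ) : EReal)
        + ((2 * γ : ℝ) : EReal) * g zhalf
      ≤ ((‖z - u‖ ^ 2 + (γ ^ 2 * L ^ 2 - 1) * ‖zhalf - z‖ ^ 2 : ℝ) : EReal)
        + ((2 * γ : ℝ) : EReal) * g u := by
  -- finiteness of g at prox points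
  have hfin : ∀ x, g (prox x) ≠ ⊤ := by
    obtain ⟨x₀, hx₀⟩ := hg_top
    intro x htop
    have hP := hprox x x₀
    rw [htop, EReal.coe_mul_top_of_pos hγ] at hP
    rw [(EReal.coe_toReal hx₀ (hg_bot x₀)).symm, ← EReal.coe_mul, ← EReal.coe_add] at hP
    rw [EReal.top_add_coe _] at hP
    exact (EReal.coe_ne_top _) (top_le_iff.mp hP)
  have hhtop : g zhalf ≠ ⊤ := by rw [hzhalf]; exact hfin _
  have hptop : g zplus ≠ ⊤ := by rw [hzplus]; exact hfin _
  set ah : ℝ := (g zhalf).toReal with hah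
  set ap : ℝ := (g zplus).toReal with hap
  set bu : ℝ := (g u).toReal with hbu
  have hgh : g zhalf = (ah : EReal) := (EReal.coe_toReal hhtop (hg_bot _)).symm
  have hgp : g zplus = (ap : EReal) := (EReal.coe_toReal hptop (hg_bot _)).symm
  have hgu : g u = (bu : EReal) := (EReal.coe_toReal hu (hg_bot _)).symm
  -- two three-point inequalities
  have h1 := prox_three_point_aux d γ hγ g hg_bot hg_convex prox hprox
    (z - γ • G zhalf) u ap bu (by rw [← hzplus]; exact hgp) hgu
  rw [← hzplus] at h1
  have h2 := prox_three_point_aux d γ hγ g hg_bot hg_convex prox hprox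
    (z - γ • G z) zplus ah ap (by rw [← hzhalf]; exact hgh) hgp
  rw [← hzhalf] at h2
  -- expand the inner products
  have e1 : ⟪zplus - (z - γ • G zhalf), u - zplus⟫
      = ⟪z - zplus, zplus - u⟫ - γ * ⟪G zhalf, zplus - u⟫ := by
    simp only [inner_sub_left, inner_sub_right, real_inner_smul_left, real_inner_smul_right,
      real_inner_comm]
    ring
  have e2 : ⟪zhalf - (z - γ • G z), zplus - zhalf⟫
      = ⟪z - zhalf, zhalf - zplus⟫ - γ * ⟪G z, zhalf - zplus⟫ := by
    simp only [inner_sub_left, inner_sub_right, real_inner_smul_left, real_inner_smul_right,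
      real_inner_comm]
    ring
  rw [e1] at h1
  rw [e2] at h2
  -- norm identities
  have i1 : ‖z - u‖ ^ 2 = ‖z - zplus‖ ^ 2 + 2 * ⟪z - zplus, zplus - u⟫ + ‖zplus - u‖ ^ 2 := by
    have h := norm_add_sq_real (z - zplus) (zplus - u)
    rw [show z - zplus + (zplus - u) = z - u by abel] at h
    linarith
  have i2 : ‖z - zplus‖ ^ 2
      = ‖z - zhalf‖ ^ 2 + 2 * ⟪z - zhalf, zhalf - zplus⟫ + ‖zhalf - zplus‖ ^ 2 := by
    have h := norm_add_sq_real (z - zhalf) (zhalf - zplus)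
    rw [show z - zhalf + (zhalf - zplus) = z - zplus by abel] at h
    linarith
  have i3 : 2 * γ * ⟪G zhalf, zhalf - u⟫
      = 2 * γ * ⟪G zhalf, zhalf - zplus⟫ + 2 * γ * ⟪G zhalf, zplus - u⟫ := by
    rw [show ⟪G zhalf, zhalf - u⟫ = ⟪G zhalf, (zhalf - zplus) + (zplus - u)⟫ from by
      congr 1; abel, inner_add_right]; ring
  have i4 : ⟪G zhalf, zhalf - zplus⟫ - ⟪G z, zhalf - zplus⟫
      = ⟪G zhalf - G z, zhalf - zplus⟫ := (inner_sub_left _ _ _).symm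
  -- Cauchy–Schwarz and Lipschitz bound
  have c1 : ⟪G zhalf - G z, zhalf - zplus⟫ ≤ ‖G zhalf - G z‖ * ‖zhalf - zplus‖ :=
    real_inner_le_norm _ _
  have c2 : ‖G zhalf - G z‖ * ‖zhalf - zplus‖ ≤ (L * ‖zhalf - z‖) * ‖zhalf - zplus‖ :=
    mul_le_mul_of_nonneg_right (hGLip zhalf z) (norm_nonneg _)
  have hbd2 : 2 * γ * (⟪G zhalf, zhalf - zplus⟫ - ⟪G z, zhalf - zplus⟫)
      ≤ 2 * γ * ((L * ‖zhalf - z‖) * ‖zhalf - zplus‖) := by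
    rw [i4]; exact mul_le_mul_of_nonneg_left (c1.trans c2) (by positivity)
  have hyoung : 2 * γ * ((L * ‖zhalf - z‖) * ‖zhalf - zplus‖)
      ≤ γ ^ 2 * L ^ 2 * ‖zhalf - z‖ ^ 2 + ‖zhalf - zplus‖ ^ 2 := by
    nlinarith [sq_nonneg (γ * L * ‖zhalf - z‖ - ‖zhalf - zplus‖)]
  have hrev : ‖zhalf - z‖ = ‖z - zhalf‖ := norm_sub_rev _ _
  -- conclude
  rw [hgh, hgu, ← EReal.coe_mul, ← EReal.coe_mul, ← EReal.coe_add, ← EReal.coe_add]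
  rw [EReal.coe_le_coe_iff]
  rw [hrev] at hbd2 hyoung ⊢
  have h1' : 2 * (γ * (ap - bu)) ≤ 2 * (⟪z - zplus, zplus - u⟫ - γ * ⟪G zhalf, zplus - u⟫) := by
    linarith
  have h2' : 2 * (γ * (ah - ap)) ≤ 2 * (⟪z - zhalf, zhalf - zplus⟫ - γ * ⟪G z, zhalf - zplus⟫) := by
    linarith
  linarith [h1', h2', i1, i2, i3, hbd2, hyoung]
end

section
/- Let g : ℝ^d → ℝ ∪ {+∞} be proper convex lower semicontinuous, let G_0, G_1, … : ℝ^d → ℝ^d each be L-Lipschitz, let γ > 0, and let n ≥ 1 be an integer. Starting from z^0 ∈ ℝ^d, define for i = 0, 1, 2, …: z^{i+1/2} = prox_{γg}(z^i − γ G_i(z^i)) and z^{i+1} = prox_{γg}(z^i − γ G_i(z^{i+1/2})). Then for every t ≥ 0: ‖z^{t+1/2} − z^0‖² ≤ (1 + n + n γ² L²) · ∑_{i=0}^{t} (1 + 1/n)^{2(t−i)} ‖z^{i+1/2} − z^i‖². -/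
set_option maxHeartbeats 1000000

open Finset

lemma geo_aux (r : ℝ) (hr0 : 0 ≤ r) (hr1 : r < 1) :
    ∀ t : ℕ, (1 - r) * ∑ k ∈ range t, r ^ k ≤ 1 := by
  intro t
  induction t with
  | zero => norm_num
  | succ m ih =>
    rw [geom_sum_succ]
    nlinarith [mul_le_mul_of_nonneg_left ih hr0]

variable {d : ℕ} in
lemma prox_nonexpansive_aux
    (γ : ℝ) (hγ : 0 < γ)
    (g : EuclideanSpace ℝ (Fin d) → EReal)
    (hg_bot : ∀ x, g x ≠ ⊥) (hg_top : ∃ x, g x ≠ ⊤)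
    (hg_convex : ∀ (x y : EuclideanSpace ℝ (Fin d)) (a b : ℝ), 0 ≤ a → 0 ≤ b → a + b = 1 →
      g (a • x + b • y) ≤ (a : EReal) * g x + (b : EReal) * g y)
    (prox : EuclideanSpace ℝ (Fin d) → EuclideanSpace ℝ (Fin d))
    (hprox : ∀ x y : EuclideanSpace ℝ (Fin d),
      (γ : EReal) * g (prox x) + ((‖prox x - x‖ ^ 2 / 2 : ℝ) : EReal)
        ≤ (γ : EReal) * g y + ((‖y - x‖ ^ 2 / 2 : ℝ) : EReal)) :
    ∀ x y : EuclideanSpace ℝ (Fin d), ‖prox x - prox y‖ ≤ ‖x - y‖ := by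
  -- prox values are finite
  have hfin : ∀ x, g (prox x) ≠ ⊤ := by
    intro x htop
    obtain ⟨y0, hy0⟩ := hg_top
    have h := hprox x y0
    rw [htop, EReal.coe_mul_top_of_pos hγ, EReal.top_add_of_ne_bot (by simp)] at h
    rw [← EReal.coe_toReal hy0 (hg_bot y0), ← EReal.coe_mul, ← EReal.coe_add] at h
    exact (EReal.coe_lt_top _).not_ge (le_of_eq rfl |>.trans h)
  -- real form of the prox inequality
  have hreal : ∀ x y : EuclideanSpace ℝ (Fin d), g y ≠ ⊤ →
      γ * (g (prox x)).toReal + ‖prox x - x‖ ^ 2 / 2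
        ≤ γ * (g y).toReal + ‖y - x‖ ^ 2 / 2 := by
    intro x y hy
    have h := hprox x y
    rw [← EReal.coe_toReal (hfin x) (hg_bot _), ← EReal.coe_toReal hy (hg_bot y),
      ← EReal.coe_mul, ← EReal.coe_mul, ← EReal.coe_add, ← EReal.coe_add,
      EReal.coe_le_coe_iff] at h
    exact h
  -- the s-parametrized inequality
  have key : ∀ x y : EuclideanSpace ℝ (Fin d), ∀ s : ℝ, 0 < s → s ≤ 1 →
      γ * ((g (prox x)).toReal - (g (prox y)).toReal) ≤
        inner ℝ (prox x - x) (prox y - prox x) + s * ‖prox y - prox x‖ ^ 2 / 2 := by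
    intro x y s hs hs1
    set p := prox x
    set q := prox y
    set P := (g p).toReal
    set Q := (g q).toReal
    set m : EuclideanSpace ℝ (Fin d) := (1 - s) • p + s • q with hm
    have hconv := hg_convex p q (1 - s) s (by linarith) hs.le (by ring)
    rw [← EReal.coe_toReal (hfin x) (hg_bot _), ← EReal.coe_toReal (hfin y) (hg_bot _),
      ← EReal.coe_mul, ← EReal.coe_mul, ← EReal.coe_add] at hconv
    have hmtop : g m ≠ ⊤ := fun h => by
      rw [h] at hconv; exact (EReal.coe_lt_top _).not_ge hconv
    have hM : (g m).toReal ≤ (1 - s) * P + s * Q := by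
      rw [← EReal.coe_toReal hmtop (hg_bot m), EReal.coe_le_coe_iff] at hconv
      exact hconv
    have h1 := hreal x m hmtop
    have hmx : m - x = (p - x) + s • (q - p) := by
      rw [hm]; module
    have hnorm : ‖m - x‖ ^ 2 = ‖p - x‖ ^ 2 + 2 * (s * inner ℝ (p - x) (q - p))
        + s ^ 2 * ‖q - p‖ ^ 2 := by
      rw [hmx, norm_add_sq_real, real_inner_smul_right, norm_smul]
      simp [abs_of_pos hs, mul_pow]
    have h2 : γ * P + ‖p - x‖ ^ 2 / 2 ≤ γ * ((1 - s) * P + s * Q) +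
        (‖p - x‖ ^ 2 + 2 * (s * inner ℝ (p - x) (q - p)) + s ^ 2 * ‖q - p‖ ^ 2) / 2 := by
      rw [← hnorm]
      calc γ * P + ‖p - x‖ ^ 2 / 2 ≤ γ * (g m).toReal + ‖m - x‖ ^ 2 / 2 := h1
        _ ≤ _ := by nlinarith [hγ]
    have h3 : s * (γ * (P - Q)) ≤ s * ((inner ℝ (p - x) (q - p) : ℝ) + s * ‖q - p‖ ^ 2 / 2) := by
      nlinarith [h2]
    have := (mul_le_mul_iff_right₀ hs).mp h3
    have hqp : ‖q - p‖ = ‖prox y - prox x‖ := rfl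
    nlinarith [this]
  -- nonexpansiveness
  intro x y
  set p := prox x
  set q := prox y
  have hsum : ∀ s : ℝ, 0 < s → s ≤ 1 →
      ‖p - q‖ ^ 2 ≤ inner ℝ (x - y) (p - q) + s * ‖p - q‖ ^ 2 := by
    intro s hs hs1
    have h1 := key x y s hs hs1
    have h2 := key y x s hs hs1
    have e1 : (inner ℝ (p - x) (q - p) : ℝ) + inner ℝ (q - y) (p - q)
        = inner ℝ (x - y) (p - q) - ‖p - q‖ ^ 2 := by
      simp only [inner_sub_left, inner_sub_right, real_inner_self_eq_norm_sq,
        norm_sub_sq_real]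
      linear_combination real_inner_comm p q
    have hn : ‖q - p‖ = ‖p - q‖ := norm_sub_rev _ _
    rw [hn] at h1
    have hn2 : ‖p - q‖ = ‖p - q‖ := rfl
    nlinarith [h1, h2, e1]
  have hle : ‖p - q‖ ^ 2 ≤ inner ℝ (x - y) (p - q) := by
    apply le_of_forall_pos_le_add
    intro ε hε
    have hc : (0:ℝ) < ‖p - q‖ ^ 2 + 1 := by positivity
    set s : ℝ := min 1 (ε / (‖p - q‖ ^ 2 + 1)) with hsdef
    have hs0 : 0 < s := lt_min one_pos (div_pos hε hc)
    have hs1 : s ≤ 1 := min_le_left _ _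
    have := hsum s hs0 hs1
    have hsc : s * ‖p - q‖ ^ 2 ≤ ε := by
      have h1 : s ≤ ε / (‖p - q‖ ^ 2 + 1) := min_le_right _ _
      have : s * ‖p - q‖ ^ 2 ≤ (ε / (‖p - q‖ ^ 2 + 1)) * (‖p - q‖ ^ 2 + 1) := by
        apply mul_le_mul h1 (by linarith) (sq_nonneg _) (le_of_lt (div_pos hε hc))
      rw [div_mul_cancel₀ _ (ne_of_gt hc)] at this
      linarith
    linarith
  have hcs : (inner ℝ (x - y) (p - q) : ℝ) ≤ ‖x - y‖ * ‖p - q‖ := real_inner_le_norm _ _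
  nlinarith [norm_nonneg (p - q), norm_nonneg (x - y)]

/-- Drift bound for extragradient iterates: if `z^{i+1/2} = prox_{γg}(z^i − γ G_i(z^i))`
and `z^{i+1} = prox_{γg}(z^i − γ G_i(z^{i+1/2}))` with each `G_i` `L`-Lipschitz, then for all
`t`, `‖z^{t+1/2} − z^0‖² ≤ (1 + n + nγ²L²) ∑_{i=0}^t (1 + 1/n)^{2(t−i)} ‖z^{i+1/2} − z^i‖²`. -/
theorem extragradient_epoch_drift_bound
    (d n : ℕ) (hn : 1 ≤ n) (L γ : ℝ) (hγ : 0 < γ)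
    (g : EuclideanSpace ℝ (Fin d) → EReal)
    (hg_bot : ∀ x, g x ≠ ⊥) (hg_top : ∃ x, g x ≠ ⊤)
    (hg_convex : ∀ (x y : EuclideanSpace ℝ (Fin d)) (a b : ℝ), 0 ≤ a → 0 ≤ b → a + b = 1 →
      g (a • x + b • y) ≤ (a : EReal) * g x + (b : EReal) * g y)
    (hg_lsc : LowerSemicontinuous g)
    (prox : EuclideanSpace ℝ (Fin d) → EuclideanSpace ℝ (Fin d))
    (hprox : ∀ x y : EuclideanSpace ℝ (Fin d),
      (γ : EReal) * g (prox x) + ((‖prox x - x‖ ^ 2 / 2 : ℝ) : EReal)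
        ≤ (γ : EReal) * g y + ((‖y - x‖ ^ 2 / 2 : ℝ) : EReal))
    (G : ℕ → EuclideanSpace ℝ (Fin d) → EuclideanSpace ℝ (Fin d))
    (hGLip : ∀ (i : ℕ) (z₁ z₂ : EuclideanSpace ℝ (Fin d)), ‖G i z₁ - G i z₂‖ ≤ L * ‖z₁ - z₂‖)
    (z zhalf : ℕ → EuclideanSpace ℝ (Fin d))
    (hzhalf : ∀ i, zhalf i = prox (z i - γ • G i (z i)))
    (hzstep : ∀ i, z (i + 1) = prox (z i - γ • G i (zhalf i))) :
    ∀ t, ‖zhalf t - z 0‖ ^ 2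
      ≤ (1 + n + n * γ ^ 2 * L ^ 2) *
          ∑ i ∈ Finset.range (t + 1), (1 + 1 / (n : ℝ)) ^ (2 * (t - i)) * ‖zhalf i - z i‖ ^ 2 := by
  have nonexp : ∀ x y : EuclideanSpace ℝ (Fin d), ‖prox x - prox y‖ ≤ ‖x - y‖ :=
    prox_nonexpansive_aux γ hγ g hg_bot hg_top hg_convex prox hprox
  intro t
  have hn1 : (1:ℝ) ≤ (n:ℝ) := by exact_mod_cast hn
  have hnpos : (0:ℝ) < (n:ℝ) := by linarith
  set N : ℝ := (n:ℝ) with hN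
  set ρ : ℝ := 1 + 1/N with hρ
  have hρ1 : 1 < ρ := by
    have h : 0 < 1/N := by positivity
    rw [hρ]; linarith
  have hρ0 : 0 < ρ := by linarith
  set b : ℕ → ℝ := fun i => ‖zhalf i - z i‖ with hb
  have hbnn : ∀ i, 0 ≤ b i := fun i => norm_nonneg _
  -- step bound
  have hstep : ∀ i, ‖z (i+1) - z i‖ ≤ (1 + γ*L) * b i := by
    intro i
    have h2 := nonexp (z i - γ • G i (zhalf i)) (z i - γ • G i (z i))
    rw [← hzhalf i] at h2
    rw [← hzstep i] at h2
    have h3 : (z i - γ • G i (zhalf i)) - (z i - γ • G i (z i))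
        = γ • (G i (z i) - G i (zhalf i)) := by module
    rw [h3, norm_smul, Real.norm_eq_abs, abs_of_pos hγ] at h2
    have h4 := hGLip i (z i) (zhalf i)
    have h5 : ‖z i - zhalf i‖ = b i := by rw [hb]; exact norm_sub_rev _ _
    rw [h5] at h4
    have h6 := norm_sub_le_norm_sub_add_norm_sub (z (i+1)) (zhalf i) (z i)
    have h7 : ‖zhalf i - z i‖ = b i := by rw [hb]
    have h8 : γ * ‖G i (z i) - G i (zhalf i)‖ ≤ γ * (L * b i) :=
      mul_le_mul_of_nonneg_left h4 hγ.le
    rw [h7] at h6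
    nlinarith [h2, h6, h8]
  -- telescoping
  have htel0 : ∀ m, ‖z m - z 0‖ ≤ ∑ i ∈ range m, ‖z (i+1) - z i‖ := by
    intro m
    induction m with
    | zero => simp
    | succ k ih =>
      rw [Finset.sum_range_succ]
      have := norm_sub_le_norm_sub_add_norm_sub (z (k+1)) (z k) (z 0)
      linarith
  have htel : ‖zhalf t - z 0‖ ≤ b t + ∑ i ∈ range t, (1 + γ*L) * b i := by
    have h1 := htel0 t
    have h2 : ‖zhalf t - z 0‖ ≤ ‖zhalf t - z t‖ + ‖z t - z 0‖ :=
      norm_sub_le_norm_sub_add_norm_sub _ _ _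
    have h3 : ∑ i ∈ range t, ‖z (i+1) - z i‖ ≤ ∑ i ∈ range t, (1+γ*L)*b i :=
      Finset.sum_le_sum (fun i _ => hstep i)
    have h4 : ‖zhalf t - z t‖ = b t := by rw [hb]
    linarith
  -- coefficients
  set c : ℕ → ℝ := fun i => if i < t then 1 + γ*L else 1 with hc
  have htel' : ‖zhalf t - z 0‖ ≤ ∑ i ∈ range (t+1), c i * b i := by
    rw [Finset.sum_range_succ]
    have hct : c t = 1 := by simp [hc]
    have heq : ∑ i ∈ range t, c i * b i = ∑ i ∈ range t, (1+γ*L) * b i := by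
      apply Finset.sum_congr rfl
      intro i hi
      rw [hc]; simp [Finset.mem_range.mp hi]
    rw [hct, heq]
    linarith
  -- Cauchy–Schwarz
  set F : ℕ → ℝ := fun i => c i * (ρ⁻¹)^(t-i) with hF
  set Gf : ℕ → ℝ := fun i => ρ^(t-i) * b i with hGf
  have hFG : ∀ i, F i * Gf i = c i * b i := by
    intro i
    have h : (ρ⁻¹)^(t-i) * ρ^(t-i) = 1 := by
      rw [← mul_pow, inv_mul_cancel₀ (ne_of_gt hρ0), one_pow]
    calc F i * Gf i = c i * b i * ((ρ⁻¹)^(t-i) * ρ^(t-i)) := by rw [hF, hGf]; ring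
      _ = c i * b i := by rw [h, mul_one]
  have hCS := Finset.sum_mul_sq_le_sq_mul_sq (range (t+1)) F Gf
  -- bound on ∑ F²
  set r : ℝ := (ρ⁻¹)^2 with hr
  have hr0 : 0 ≤ r := by positivity
  have hρinv1 : ρ⁻¹ < 1 := by rw [inv_lt_one_iff₀]; right; exact hρ1
  have hr1 : r < 1 := by
    rw [hr]
    nlinarith [inv_pos.mpr hρ0]
  have hgeo : ∑ k ∈ range t, r ^ k ≤ 1/(1-r) := by
    rw [le_div_iff₀ (by linarith)]
    have := geo_aux r hr0 hr1 t
    nlinarith [this]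
  have hrρ : r * ρ^2 = 1 := by
    rw [hr, ← mul_pow, inv_mul_cancel₀ (ne_of_gt hρ0), one_pow]
  have hρ2 : N * ρ^2 = N + 2 + 1/N := by
    rw [hρ]; field_simp; ring
  have hkey2 : r * (N + 2 + 1/N) = N := by
    calc r * (N + 2 + 1/N) = r * (N * ρ^2) := by rw [hρ2]
      _ = N * (r * ρ^2) := by ring
      _ = N := by rw [hrρ, mul_one]
  have hsumF : ∑ i ∈ range (t+1), F i ^ 2 ≤ 1 + N + N * γ^2 * L^2 := by
    have hF2 : ∀ i, F i ^ 2 = c i ^ 2 * r ^ (t - i) := by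
      intro i
      rw [hF, hr, mul_pow, ← pow_mul, ← pow_mul, Nat.mul_comm]
    have e1 : ∑ i ∈ range (t+1), F i ^ 2
        = ∑ i ∈ range t, c i ^ 2 * r ^ (t-i) + 1 := by
      rw [Finset.sum_range_succ]
      simp only [hF2]
      congr 1
      simp [hc]
    have e2 : ∑ i ∈ range t, c i ^ 2 * r ^ (t-i)
        = (1+γ*L)^2 * ∑ i ∈ range t, r ^ (t-i) := by
      rw [Finset.mul_sum]
      apply Finset.sum_congr rfl
      intro i hi
      rw [hc]; simp [Finset.mem_range.mp hi]
    have e3 : ∑ i ∈ range t, r ^ (t-i) = ∑ k ∈ range t, r ^ (k+1) := by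
      rw [← Finset.sum_range_reflect]
      apply Finset.sum_congr rfl
      intro j hj
      have hjt : j < t := Finset.mem_range.mp hj
      congr 1
      omega
    have e4 : ∑ k ∈ range t, r ^ (k+1) = (∑ k ∈ range t, r ^ k) * r := by
      rw [Finset.sum_mul]
      apply Finset.sum_congr rfl
      intro k _
      rw [pow_succ]
    have hsum_le : ∑ i ∈ range t, r ^ (t-i) ≤ N/2 := by
      rw [e3, e4]
      have h1 : (∑ k ∈ range t, r ^ k) * r ≤ (1/(1-r)) * r :=
        mul_le_mul_of_nonneg_right hgeo hr0
      have h1r : (0:ℝ) < 1 - r := by linarith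
      have h2 : (1/(1-r)) * r ≤ N/2 := by
        rw [div_mul_eq_mul_div, one_mul, div_le_iff₀ h1r]
        have hrN : 0 ≤ r * (1/N) := by positivity
        nlinarith [hkey2, hrN]
      linarith
    have hquad : (1+γ*L)^2 ≤ 2 + 2*γ^2*L^2 := by nlinarith [sq_nonneg (1 - γ*L)]
    have hsnn : 0 ≤ ∑ i ∈ range t, r ^ (t-i) := by
      apply Finset.sum_nonneg
      intro i _
      positivity
    have hfinal : (1+γ*L)^2 * ∑ i ∈ range t, r ^ (t-i) ≤ (2 + 2*γ^2*L^2) * (N/2) :=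
      mul_le_mul hquad hsum_le hsnn (by positivity)
    rw [e1, e2]
    nlinarith [hfinal]
  -- finish
  have hGf2 : ∑ i ∈ range (t+1), Gf i ^ 2
      = ∑ i ∈ range (t+1), (1 + 1/(n:ℝ)) ^ (2 * (t - i)) * ‖zhalf i - z i‖ ^ 2 := by
    apply Finset.sum_congr rfl
    intro i _
    rw [hGf, mul_pow, ← pow_mul, Nat.mul_comm]
  have hGfnn : 0 ≤ ∑ i ∈ range (t+1), Gf i ^ 2 :=
    Finset.sum_nonneg (fun i _ => sq_nonneg _)
  have hsq : ‖zhalf t - z 0‖ ^ 2 ≤ (∑ i ∈ range (t+1), c i * b i) ^ 2 :=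
    pow_le_pow_left₀ (norm_nonneg _) htel' 2
  have hFGsum : ∑ i ∈ range (t+1), F i * Gf i = ∑ i ∈ range (t+1), c i * b i :=
    Finset.sum_congr rfl (fun i _ => hFG i)
  calc ‖zhalf t - z 0‖ ^ 2 ≤ (∑ i ∈ range (t+1), c i * b i) ^ 2 := hsq
    _ = (∑ i ∈ range (t+1), F i * Gf i) ^ 2 := by rw [hFGsum]
    _ ≤ (∑ i ∈ range (t+1), F i ^ 2) * ∑ i ∈ range (t+1), Gf i ^ 2 := hCS
    _ ≤ (1 + N + N * γ^2 * L^2) * ∑ i ∈ range (t+1), Gf i ^ 2 :=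
        mul_le_mul_of_nonneg_right hsumF hGfnn
    _ = _ := by rw [hGf2]
end

section
/- Let F_1,…,F_n : ℝ^d → ℝ^d each be μ-strongly monotone, with (1/n)∑_{i=1}^n ‖F_i(z*)‖² ≤ σ*² and ‖F(z*)‖² ≤ σ*², where F = (1/n)∑_i F_i and z* solves the variational inequality for (F, g) with g(z*) < +∞. Let J be a random index uniformly distributed on {1,…,n}, let z^0 be a random vector in ℝ^d independent of J, and let w be any random vector in ℝ^d (possibly depending on J and z^0) such that all expectations below are finite. Then for every γ > 0 and β > 0: E[ ⟨F_J(w), w − z*⟩ + g(w) − g(z*) ] ≥ μ E‖w − z*‖² − (γ/β) σ*² − (β/γ) E‖w − z^0‖². -/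
open scoped RealInnerProductSpace
open MeasureTheory ProbabilityTheory

set_option linter.unusedSectionVars false

section aux
variable {n : ℕ} {Ω : Type*} [MeasureSpace Ω] [IsProbabilityMeasure (ℙ : Measure Ω)]
  {J : Ω → Fin n}

lemma aux_comp_eq (J : Ω → Fin n) (h : Fin n → ℝ) (ω : Ω) :
    h (J ω) = ∑ i, Set.indicator {ω' | J ω' = i} (fun _ => h i) ω := by
  rw [Finset.sum_eq_single (J ω)]
  · simp [Set.indicator_of_mem, Set.mem_setOf_eq]
  · intro b _ hb
    apply Set.indicator_of_notMem
    simp [Ne.symm hb]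
  · simp

lemma aux_integrable (hJ : Measurable J) (h : Fin n → ℝ) :
    Integrable (fun ω => h (J ω)) ℙ := by
  have he : (fun ω => h (J ω))
      = fun ω => ∑ i, Set.indicator {ω' | J ω' = i} (fun _ => h i) ω :=
    funext (aux_comp_eq J h)
  rw [he]
  apply integrable_finset_sum
  intro i _
  exact (integrable_const (h i)).indicator (hJ (measurableSet_singleton i))

lemma aux_integral (hJ : Measurable J)
    (hJu : ∀ i : Fin n, ℙ {ω | J ω = i} = (n : ENNReal)⁻¹) (h : Fin n → ℝ) :
    ∫ ω, h (J ω) = (n : ℝ)⁻¹ * ∑ i, h i := by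
  have he : (fun ω => h (J ω))
      = fun ω => ∑ i, Set.indicator {ω' | J ω' = i} (fun _ => h i) ω :=
    funext (aux_comp_eq J h)
  rw [he, integral_finset_sum]
  · rw [Finset.mul_sum]
    refine Finset.sum_congr rfl fun i _ => ?_
    have hs : {ω' | J ω' = i} = J ⁻¹' {i} := rfl
    rw [hs, integral_indicator_const (h i) (hJ (measurableSet_singleton i))]
    have hμ : (ℙ : Measure Ω) (J ⁻¹' {i}) = (n : ENNReal)⁻¹ := hJu i
    rw [measureReal_def, hμ]
    simp [ENNReal.toReal_inv, smul_eq_mul]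
  · intro i _
    exact (integrable_const (h i)).indicator (hJ (measurableSet_singleton i))

end aux

lemma young_ineq {d : ℕ} (c : ℝ) (hc : 0 < c) (a b : EuclideanSpace ℝ (Fin d)) :
    -(c / 2 * ‖a‖ ^ 2) - 1 / (2 * c) * ‖b‖ ^ 2 ≤ ⟪a, b⟫ := by
  have h := abs_real_inner_le_norm a b
  have h1 : -(‖a‖ * ‖b‖) ≤ ⟪a, b⟫ := (abs_le.mp h).1
  have key : 2 * c * (c / 2 * ‖a‖ ^ 2 + 1 / (2 * c) * ‖b‖ ^ 2 - ‖a‖ * ‖b‖)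
      = (c * ‖a‖ - ‖b‖) ^ 2 := by
    field_simp; ring
  have h2 : (0:ℝ) ≤ (c * ‖a‖ - ‖b‖) ^ 2 := sq_nonneg _
  rw [← key] at h2
  have h3 : (0:ℝ) ≤ c / 2 * ‖a‖ ^ 2 + 1 / (2 * c) * ‖b‖ ^ 2 - ‖a‖ * ‖b‖ :=
    nonneg_of_mul_nonneg_right h2 (by linarith)
  linarith

lemma coord_le_norm {d : ℕ} (x : EuclideanSpace ℝ (Fin d)) (k : Fin d) : |x k| ≤ ‖x‖ := by
  have h2 : |x k| ^ 2 ≤ ‖x‖ ^ 2 := by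
    rw [EuclideanSpace.norm_eq, Real.sq_sqrt (by positivity)]
    calc |x k| ^ 2 = ‖x k‖ ^ 2 := by rw [Real.norm_eq_abs]
      _ ≤ ∑ i, ‖x i‖ ^ 2 :=
        Finset.single_le_sum (f := fun i => ‖x i‖ ^ 2) (fun i _ => by positivity)
          (Finset.mem_univ k)
  calc |x k| = Real.sqrt (|x k| ^ 2) := (Real.sqrt_sq (abs_nonneg _)).symm
    _ ≤ Real.sqrt (‖x‖ ^ 2) := Real.sqrt_le_sqrt h2
    _ = ‖x‖ := Real.sqrt_sq (norm_nonneg _)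

/-- Lower bound on `E[⟨F_J(w), w − z*⟩ + g(w) − g(z*)]` for a uniformly random index `J`
independent of `z⁰`, where each `F_i` is `μ`-strongly monotone, the variance at the optimum
is bounded by `σ*²`, and `z*` solves the variational inequality for `(F, g)`:
`E[⟨F_J(w), w − z*⟩ + g(w) − g(z*)] ≥ μ E‖w − z*‖² − (γ/β)σ*² − (β/γ)E‖w − z⁰‖²`. -/
theorem expected_operator_lower_bound
    (d n : ℕ) (hn : 0 < n) (μ γ β σstar : ℝ) (hμ : 0 < μ) (hγ : 0 < γ) (hβ : 0 < β)
    (F : Fin n → EuclideanSpace ℝ (Fin d) → EuclideanSpace ℝ (Fin d))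
    (hmono : ∀ (i : Fin n) (z₁ z₂ : EuclideanSpace ℝ (Fin d)),
      μ * ‖z₁ - z₂‖ ^ 2 ≤ ⟪F i z₁ - F i z₂, z₁ - z₂⟫)
    (g : EuclideanSpace ℝ (Fin d) → EReal)
    (hg_bot : ∀ x, g x ≠ ⊥) (hg_top : ∃ x, g x ≠ ⊤)
    (hg_convex : ∀ (x y : EuclideanSpace ℝ (Fin d)) (a b : ℝ), 0 ≤ a → 0 ≤ b → a + b = 1 →
      g (a • x + b • y) ≤ (a : EReal) * g x + (b : EReal) * g y)
    (hg_lsc : LowerSemicontinuous g)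
    (zstar : EuclideanSpace ℝ (Fin d)) (hzstar : g zstar ≠ ⊤)
    (hVI : ∀ z, g zstar ≤ ((⟪(n : ℝ)⁻¹ • ∑ i, F i zstar, z - zstar⟫ : ℝ) : EReal) + g z)
    (hvar1 : (n : ℝ)⁻¹ * ∑ i, ‖F i zstar‖ ^ 2 ≤ σstar ^ 2)
    (hvar2 : ‖(n : ℝ)⁻¹ • ∑ i, F i zstar‖ ^ 2 ≤ σstar ^ 2)
    (Ω : Type*) [MeasureSpace Ω] [IsProbabilityMeasure (ℙ : Measure Ω)]
    (J : Ω → Fin n) (z0 w : Ω → EuclideanSpace ℝ (Fin d))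
    (hJmeas : Measurable J) (hz0meas : Measurable z0) (hwmeas : Measurable w)
    (hJunif : ∀ i : Fin n, ℙ {ω | J ω = i} = (n : ENNReal)⁻¹)
    (hindep : IndepFun J z0 ℙ)
    (hgw_fin : ∀ᵐ ω ∂ℙ, g (w ω) ≠ ⊤)
    (hint1 : Integrable fun ω => ⟪F (J ω) (w ω), w ω - zstar⟫)
    (hint2 : Integrable fun ω => (g (w ω)).toReal)
    (hint3 : Integrable fun ω => ‖w ω - zstar‖ ^ 2)
    (hint4 : Integrable fun ω => ‖w ω - z0 ω‖ ^ 2) :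
    μ * (∫ ω, ‖w ω - zstar‖ ^ 2) - (γ / β) * σstar ^ 2
        - (β / γ) * (∫ ω, ‖w ω - z0 ω‖ ^ 2)
      ≤ ∫ ω, (⟪F (J ω) (w ω), w ω - zstar⟫ + (g (w ω)).toReal - (g zstar).toReal) := by
  have hn0 : (n : ℝ) ≠ 0 := Nat.cast_ne_zero.mpr hn.ne'
  set Fb : EuclideanSpace ℝ (Fin d) := (n : ℝ)⁻¹ • ∑ i, F i zstar with hFbdef
  -- coordinatewise integrability of `z0 - zstar`
  have hVmeas : Measurable (fun ω => z0 ω - zstar) := hz0meas.sub measurable_const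
  have hVnorm_int : Integrable (fun ω => ‖z0 ω - zstar‖) := by
    apply Integrable.mono' ((integrable_const (2:ℝ)).add (hint3.add hint4))
    · exact hVmeas.norm.aestronglyMeasurable
    · filter_upwards with ω
      have h1 : ‖z0 ω - zstar‖ ≤ ‖w ω - zstar‖ + ‖w ω - z0 ω‖ := by
        have he : z0 ω - zstar = (w ω - zstar) - (w ω - z0 ω) := by abel
        rw [he]; exact norm_sub_le _ _
      have h2 : ‖w ω - zstar‖ ≤ 1 + ‖w ω - zstar‖ ^ 2 := by
        nlinarith [sq_nonneg (‖w ω - zstar‖ - 1)]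
      have h3 : ‖w ω - z0 ω‖ ≤ 1 + ‖w ω - z0 ω‖ ^ 2 := by
        nlinarith [sq_nonneg (‖w ω - z0 ω‖ - 1)]
      have hnn : ‖‖z0 ω - zstar‖‖ = ‖z0 ω - zstar‖ := norm_norm _
      simp only [Pi.add_apply]
      rw [hnn]
      linarith
  have hVk_meas : ∀ k : Fin d, Measurable (fun ω => (z0 ω - zstar) k) :=
    fun k => (measurable_pi_apply k).comp ((WithLp.measurable_ofLp 2 _).comp hVmeas)
  have hVk_int : ∀ k : Fin d, Integrable (fun ω => (z0 ω - zstar) k) := by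
    intro k
    apply Integrable.mono' hVnorm_int (hVk_meas k).aestronglyMeasurable
    filter_upwards with ω
    simpa [Real.norm_eq_abs] using coord_le_norm (z0 ω - zstar) k
  -- cross term
  set q : Fin d → Fin n → ℝ := fun k i => (F i zstar - Fb) k with hqdef
  have hq0 : ∀ k, (n : ℝ)⁻¹ * ∑ i, q k i = 0 := by
    intro k
    have hsA : (∑ i, F i zstar) k = ∑ i, F i zstar k :=
      by rw [WithLp.ofLp_sum]; exact Finset.sum_apply k Finset.univ fun i => F i zstar
    have hFbk : Fb k = (n : ℝ)⁻¹ * ∑ i, F i zstar k := by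
      rw [hFbdef]
      rw [show ((n : ℝ)⁻¹ • ∑ i, F i zstar) k = (n : ℝ)⁻¹ * (∑ i, F i zstar) k from rfl, hsA]
    have hsum : ∑ i, q k i = 0 := by
      simp only [hqdef, PiLp.sub_apply, Finset.sum_sub_distrib, Finset.sum_const,
        Finset.card_univ, Fintype.card_fin, nsmul_eq_mul, hFbk]
      field_simp
      ring
    rw [hsum, mul_zero]
  have hq_int : ∀ k, Integrable (fun ω => q k (J ω) * (z0 ω - zstar) k) := by
    intro k
    apply Integrable.bdd_mul (c := ∑ i, |q k i|) (hVk_int k)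
      (aux_integrable hJmeas (q k)).aestronglyMeasurable
    refine Filter.Eventually.of_forall fun ω => ?_
    rw [Real.norm_eq_abs]
    exact Finset.single_le_sum (f := fun i => |q k i|) (fun i _ => abs_nonneg _)
      (Finset.mem_univ (J ω))
  have hcross_pt : ∀ ω, ⟪F (J ω) zstar - Fb, z0 ω - zstar⟫
      = ∑ k, q k (J ω) * (z0 ω - zstar) k := by
    intro ω
    rw [PiLp.inner_apply]
    simp [hqdef, RCLike.inner_apply, starRingEnd_apply]
    exact Finset.sum_congr rfl fun i _ => mul_comm _ _
  have hcross_int : Integrable (fun ω => ⟪F (J ω) zstar - Fb, z0 ω - zstar⟫) := by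
    rw [funext hcross_pt]
    exact integrable_finset_sum _ fun k _ => hq_int k
  have hcross_zero : ∫ ω, ⟪F (J ω) zstar - Fb, z0 ω - zstar⟫ = 0 := by
    rw [funext hcross_pt, integral_finset_sum _ fun k _ => hq_int k]
    refine Finset.sum_eq_zero fun k _ => ?_
    have hik : IndepFun (fun ω => q k (J ω)) (fun ω => (z0 ω - zstar) k) ℙ :=
      hindep.comp (measurable_of_countable (q k))
        ((measurable_pi_apply k).comp ((WithLp.measurable_ofLp 2 _).comp (measurable_id.sub measurable_const)))
    have hmul := hik.integral_mul_eq_mul_integral (aux_integrable hJmeas (q k)).aestronglyMeasurable (hVk_int k).aestronglyMeasurable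
    have hX : ∫ ω, q k (J ω) = 0 := by
      rw [aux_integral hJmeas hJunif (q k)]; exact hq0 k
    calc ∫ ω, q k (J ω) * (z0 ω - zstar) k
        = (∫ ω, q k (J ω)) * ∫ ω, (z0 ω - zstar) k := by
          simpa [Pi.mul_def] using hmul
      _ = 0 := by rw [hX, zero_mul]
  -- pointwise a.e. inequality
  have hae : ∀ᵐ ω ∂ℙ,
      μ * ‖w ω - zstar‖ ^ 2 - γ / (2 * β) * ‖F (J ω) zstar‖ ^ 2 - γ / (2 * β) * ‖Fb‖ ^ 2
        - β / (2 * γ) * ‖w ω - z0 ω‖ ^ 2 - β / (2 * γ) * ‖w ω - z0 ω‖ ^ 2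
        + ⟪F (J ω) zstar - Fb, z0 ω - zstar⟫
      ≤ ⟪F (J ω) (w ω), w ω - zstar⟫ + (g (w ω)).toReal - (g zstar).toReal := by
    filter_upwards [hgw_fin] with ω hω
    have hm := hmono (J ω) (w ω) zstar
    rw [inner_sub_left] at hm
    have hvi := hVI (w ω)
    have hne : ((⟪Fb, w ω - zstar⟫ : ℝ) : EReal) + g (w ω) ≠ ⊤ :=
      (EReal.add_lt_top (EReal.coe_ne_top _) hω).ne
    have hvi' := EReal.toReal_le_toReal hvi (hg_bot zstar) hne
    rw [EReal.toReal_add (EReal.coe_ne_top _) (EReal.coe_ne_bot _) hω (hg_bot _),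
      EReal.toReal_coe] at hvi'
    have hc : 0 < γ / β := div_pos hγ hβ
    have hY1 := young_ineq (γ / β) hc (F (J ω) zstar) (w ω - z0 ω)
    have hY2 := young_ineq (γ / β) hc Fb (z0 ω - w ω)
    have e1 : γ / β / 2 = γ / (2 * β) := by ring
    have e2 : 1 / (2 * (γ / β)) = β / (2 * γ) := by
      field_simp
    rw [e1, e2] at hY1 hY2
    have hns : ‖z0 ω - w ω‖ = ‖w ω - z0 ω‖ := norm_sub_rev _ _
    rw [hns] at hY2
    have key : ⟪F (J ω) zstar, w ω - zstar⟫
        = ⟪F (J ω) zstar, w ω - z0 ω⟫ + ⟪F (J ω) zstar - Fb, z0 ω - zstar⟫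
          + ⟪Fb, z0 ω - w ω⟫ + ⟪Fb, w ω - zstar⟫ := by
      simp only [inner_sub_left, inner_sub_right]
      ring
    linarith
  -- integrability of the lower function
  have i1 : Integrable (fun ω => μ * ‖w ω - zstar‖ ^ 2) := hint3.const_mul μ
  have i2 : Integrable (fun ω => γ / (2 * β) * ‖F (J ω) zstar‖ ^ 2) :=
    (aux_integrable hJmeas (fun i => ‖F i zstar‖ ^ 2)).const_mul _
  have i3 : Integrable (fun _ : Ω => γ / (2 * β) * ‖Fb‖ ^ 2) := integrable_const _
  have i4 : Integrable (fun ω => β / (2 * γ) * ‖w ω - z0 ω‖ ^ 2) := hint4.const_mul _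
  have i12 : Integrable (fun ω => μ * ‖w ω - zstar‖ ^ 2
      - γ / (2 * β) * ‖F (J ω) zstar‖ ^ 2) := i1.sub i2
  have i123 : Integrable (fun ω => μ * ‖w ω - zstar‖ ^ 2
      - γ / (2 * β) * ‖F (J ω) zstar‖ ^ 2 - γ / (2 * β) * ‖Fb‖ ^ 2) := i12.sub i3
  have i1234 : Integrable (fun ω => μ * ‖w ω - zstar‖ ^ 2
      - γ / (2 * β) * ‖F (J ω) zstar‖ ^ 2 - γ / (2 * β) * ‖Fb‖ ^ 2
      - β / (2 * γ) * ‖w ω - z0 ω‖ ^ 2) := i123.sub i4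
  have i5 : Integrable (fun ω => μ * ‖w ω - zstar‖ ^ 2
      - γ / (2 * β) * ‖F (J ω) zstar‖ ^ 2 - γ / (2 * β) * ‖Fb‖ ^ 2
      - β / (2 * γ) * ‖w ω - z0 ω‖ ^ 2 - β / (2 * γ) * ‖w ω - z0 ω‖ ^ 2) := i1234.sub i4
  have hR_int : Integrable (fun ω => μ * ‖w ω - zstar‖ ^ 2
      - γ / (2 * β) * ‖F (J ω) zstar‖ ^ 2 - γ / (2 * β) * ‖Fb‖ ^ 2
      - β / (2 * γ) * ‖w ω - z0 ω‖ ^ 2 - β / (2 * γ) * ‖w ω - z0 ω‖ ^ 2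
      + ⟪F (J ω) zstar - Fb, z0 ω - zstar⟫) := i5.add hcross_int
  have hL_int : Integrable
      (fun ω => ⟪F (J ω) (w ω), w ω - zstar⟫ + (g (w ω)).toReal - (g zstar).toReal) :=
    (hint1.add hint2).sub (integrable_const _)
  have hmain := integral_mono_ae hR_int hL_int hae
  -- compute the integral of the lower function
  have hIR : (∫ ω, (μ * ‖w ω - zstar‖ ^ 2 - γ / (2 * β) * ‖F (J ω) zstar‖ ^ 2
        - γ / (2 * β) * ‖Fb‖ ^ 2 - β / (2 * γ) * ‖w ω - z0 ω‖ ^ 2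
        - β / (2 * γ) * ‖w ω - z0 ω‖ ^ 2
        + ⟪F (J ω) zstar - Fb, z0 ω - zstar⟫))
      = μ * (∫ ω, ‖w ω - zstar‖ ^ 2)
        - γ / (2 * β) * (∫ ω, ‖F (J ω) zstar‖ ^ 2)
        - γ / (2 * β) * ‖Fb‖ ^ 2
        - β / (2 * γ) * (∫ ω, ‖w ω - z0 ω‖ ^ 2)
        - β / (2 * γ) * (∫ ω, ‖w ω - z0 ω‖ ^ 2) := by
    rw [integral_add i5 hcross_int, hcross_zero, add_zero,
      integral_sub i1234 i4, integral_sub i123 i4, integral_sub i12 i3,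
      integral_sub i1 i2, integral_const_mul, integral_const_mul, integral_const_mul,
      integral_const]
    simp [integral_const_mul]
  rw [hIR] at hmain
  -- final arithmetic
  have hSJ : ∫ ω, ‖F (J ω) zstar‖ ^ 2 ≤ σstar ^ 2 := by
    rw [aux_integral hJmeas hJunif (fun i => ‖F i zstar‖ ^ 2)]
    exact hvar1
  have hI4 : 0 ≤ ∫ ω, ‖w ω - z0 ω‖ ^ 2 := integral_nonneg fun ω => by positivity
  have hcβ : (0:ℝ) ≤ γ / (2 * β) := by positivity
  have p1 : γ / (2 * β) * (∫ ω, ‖F (J ω) zstar‖ ^ 2) ≤ γ / (2 * β) * σstar ^ 2 :=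
    mul_le_mul_of_nonneg_left hSJ hcβ
  have p2 : γ / (2 * β) * ‖Fb‖ ^ 2 ≤ γ / (2 * β) * σstar ^ 2 :=
    mul_le_mul_of_nonneg_left hvar2 hcβ
  have p3 : γ / (2 * β) * σstar ^ 2 + γ / (2 * β) * σstar ^ 2 = γ / β * σstar ^ 2 := by
    field_simp
    ring
  have p4 : β / (2 * γ) * (∫ ω, ‖w ω - z0 ω‖ ^ 2) + β / (2 * γ) * (∫ ω, ‖w ω - z0 ω‖ ^ 2)
      = β / γ * (∫ ω, ‖w ω - z0 ω‖ ^ 2) := by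
    field_simp
    ring
  linarith
end

section
/- Let g : ℝ^d → ℝ ∪ {+∞} be proper convex lower semicontinuous, let F_1,…,F_n : ℝ^d → ℝ^d each be L-Lipschitz and μ-strongly monotone, with (1/n)∑_i ‖F_i(z*)‖² ≤ σ*² and ‖F(z*)‖² ≤ σ*², where F = (1/n)∑_i F_i and z* solves the variational inequality for (F, g). Let J be a random index uniformly distributed on {1,…,n}, independent of a random vector z^0. Given a random vector z^t (depending on z^0 and past randomness but such that the update below uses J), define z^{t+1/2} = prox_{γg}(z^t − γ F_J(z^t)) and z^{t+1} = prox_{γg}(z^t − γ F_J(z^{t+1/2})). Then for every γ > 0 and β > 0: E‖z^{t+1} − z*‖² ≤ (1 − γμ) E‖z^t − z*‖² + (γ²L² + 2γμ − 1) E‖z^{t+1/2} − z^t‖² + (2γ²/β) σ*² + 2β E‖z^{t+1/2} − z^0‖². -/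
open scoped RealInnerProductSpace
open MeasureTheory ProbabilityTheory


set_option maxHeartbeats 1000000 in
private lemma seg_aux_prox_vi {d : ℕ} (γ : ℝ) (hγ : 0 < γ)
    (g : EuclideanSpace ℝ (Fin d) → EReal)
    (hg_bot : ∀ x, g x ≠ ⊥)
    (hg_convex : ∀ (x y : EuclideanSpace ℝ (Fin d)) (a b : ℝ), 0 ≤ a → 0 ≤ b → a + b = 1 →
      g (a • x + b • y) ≤ (a : EReal) * g x + (b : EReal) * g y)
    (prox : EuclideanSpace ℝ (Fin d) → EuclideanSpace ℝ (Fin d))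
    (hprox : ∀ x y : EuclideanSpace ℝ (Fin d),
      (γ : EReal) * g (prox x) + ((‖prox x - x‖ ^ 2 / 2 : ℝ) : EReal)
        ≤ (γ : EReal) * g y + ((‖y - x‖ ^ 2 / 2 : ℝ) : EReal))
    (hfin : ∀ x, g (prox x) ≠ ⊤) :
    ∀ x y : EuclideanSpace ℝ (Fin d), g y ≠ ⊤ →
      0 ≤ γ * ((g y).toReal - (g (prox x)).toReal)
        + inner (𝕜 := ℝ) (y - prox x) (prox x - x) := by
  have hproxR : ∀ x w : EuclideanSpace ℝ (Fin d), g w ≠ ⊤ →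
      γ * (g (prox x)).toReal + ‖prox x - x‖ ^ 2 / 2 ≤ γ * (g w).toReal + ‖w - x‖ ^ 2 / 2 := by
    intro x w hw
    have h := hprox x w
    rw [(EReal.coe_toReal (hfin x) (hg_bot _)).symm, (EReal.coe_toReal hw (hg_bot _)).symm,
      ← EReal.coe_mul, ← EReal.coe_mul, ← EReal.coe_add, ← EReal.coe_add,
      EReal.coe_le_coe_iff] at h
    exact h
  have hconvR : ∀ (x y : EuclideanSpace ℝ (Fin d)) (a b : ℝ),
      g x ≠ ⊤ → g y ≠ ⊤ → 0 ≤ a → 0 ≤ b → a + b = 1 →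
      g (a • x + b • y) ≠ ⊤ ∧
      (g (a • x + b • y)).toReal ≤ a * (g x).toReal + b * (g y).toReal := by
    intro x y a b hx hy ha hb hab
    have h := hg_convex x y a b ha hb hab
    rw [(EReal.coe_toReal hx (hg_bot _)).symm, (EReal.coe_toReal hy (hg_bot _)).symm,
      ← EReal.coe_mul, ← EReal.coe_mul, ← EReal.coe_add] at h
    have htop : g (a • x + b • y) ≠ ⊤ := fun ht => by
      rw [ht] at h; exact (EReal.coe_lt_top _).not_ge h
    refine ⟨htop, ?_⟩
    rw [(EReal.coe_toReal htop (hg_bot _)).symm, EReal.coe_le_coe_iff] at h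
    exact h
  intro x y hy
  set u := prox x with hu
  set A : ℝ := γ * ((g y).toReal - (g u).toReal) + inner (𝕜 := ℝ) (y - u) (u - x) with hA
  by_contra hneg
  push_neg at hneg
  have hstep : ∀ lam : ℝ, 0 < lam → lam ≤ 1 → 0 ≤ A + lam / 2 * ‖y - u‖ ^ 2 := by
    intro lam h0 h1
    have hconv := hconvR u y (1 - lam) lam (hfin x) hy (by linarith) (le_of_lt h0) (by ring)
    have hp := hproxR x ((1 - lam) • u + lam • y) hconv.1
    have hexp : (1 - lam) • u + lam • y - x = (u - x) + lam • (y - u) := by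
      module
    have hnorm : ‖(1 - lam) • u + lam • y - x‖ ^ 2
        = ‖u - x‖ ^ 2 + 2 * (lam * inner (𝕜 := ℝ) (y - u) (u - x)) + lam ^ 2 * ‖y - u‖ ^ 2 := by
      rw [hexp, norm_add_sq_real, real_inner_smul_right, norm_smul,
        Real.norm_eq_abs, abs_of_pos h0, mul_pow, real_inner_comm (u - x) (y - u)]
    have h2 := hconv.2
    rw [hnorm] at hp
    have := mul_le_mul_of_nonneg_left h2 (le_of_lt hγ)
    nlinarith [this, hp]
  set B : ℝ := ‖y - u‖ ^ 2 / 2 with hB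
  have hBnn : 0 ≤ B := by positivity
  have hmain : 0 ≤ A + (min 1 (-A / (B + 1))) / 2 * ‖y - u‖ ^ 2 := by
    apply hstep
    · exact lt_min one_pos (div_pos (by linarith) (by linarith))
    · exact min_le_left _ _
  have hle : (min 1 (-A / (B + 1))) / 2 * ‖y - u‖ ^ 2 ≤ (-A / (B + 1)) * B := by
    have h1 : min 1 (-A / (B + 1)) ≤ -A / (B + 1) := min_le_right _ _
    have h2 : 0 ≤ min 1 (-A / (B + 1)) :=
      le_of_lt (lt_min one_pos (div_pos (by linarith) (by linarith)))
    calc (min 1 (-A / (B + 1))) / 2 * ‖y - u‖ ^ 2 = (min 1 (-A / (B + 1))) * B := by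
          rw [hB]; ring
      _ ≤ (-A / (B + 1)) * B := mul_le_mul_of_nonneg_right h1 hBnn
  have hfrac : (-A / (B + 1)) * B < -A := by
    rw [div_mul_eq_mul_div, div_lt_iff₀ (by linarith)]
    nlinarith
  linarith

set_option maxHeartbeats 1000000 in
private lemma seg_aux_det_step {d : ℕ} (γ μ L gs gp gu : ℝ) (hγ : 0 < γ) (hμ : 0 < μ)
    (z u p s a b c m : EuclideanSpace ℝ (Fin d))
    (h1 : 0 ≤ γ * (gs - gp) + inner (𝕜 := ℝ) (s - p) (p - (z - γ • a)))
    (h2 : 0 ≤ γ * (gp - gu) + inner (𝕜 := ℝ) (p - u) (u - (z - γ • b)))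
    (h3 : gs ≤ inner (𝕜 := ℝ) m (u - s) + gu)
    (hlip : ‖b - a‖ ≤ L * ‖z - u‖)
    (hmono : μ * ‖u - s‖ ^ 2 ≤ inner (𝕜 := ℝ) (a - c) (u - s)) :
    ‖p - s‖ ^ 2 ≤ (1 - γ * μ) * ‖z - s‖ ^ 2 + (γ ^ 2 * L ^ 2 + 2 * γ * μ - 1) * ‖u - z‖ ^ 2
      + 2 * γ * inner (𝕜 := ℝ) (c - m) (s - u) := by
  have e1 : inner (𝕜 := ℝ) (s - p) (p - (z - γ • a))
      = inner (𝕜 := ℝ) (s - p) (p - z) + γ * inner (𝕜 := ℝ) (s - p) a := by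
    rw [show p - (z - γ • a) = (p - z) + γ • a by module, inner_add_right,
      real_inner_smul_right]
  have e2 : inner (𝕜 := ℝ) (p - u) (u - (z - γ • b))
      = inner (𝕜 := ℝ) (p - u) (u - z) + γ * inner (𝕜 := ℝ) (p - u) b := by
    rw [show u - (z - γ • b) = (u - z) + γ • b by module, inner_add_right,
      real_inner_smul_right]
  have n1 : 2 * inner (𝕜 := ℝ) (s - p) (p - z) = ‖z - s‖ ^ 2 - ‖p - z‖ ^ 2 - ‖p - s‖ ^ 2 := by
    have h := norm_add_sq_real (z - p) (p - s)
    rw [show (z - p) + (p - s) = z - s by abel] at h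
    have heq : inner (𝕜 := ℝ) (z - p) (p - s) = inner (𝕜 := ℝ) (s - p) (p - z) := by
      rw [show s - p = -(p - s) by abel, show p - z = -(z - p) by abel,
        inner_neg_neg, real_inner_comm]
    rw [heq] at h
    rw [show ‖p - z‖ = ‖z - p‖ from norm_sub_rev _ _]
    linarith
  have n2 : 2 * inner (𝕜 := ℝ) (p - u) (u - z) = ‖p - z‖ ^ 2 - ‖u - z‖ ^ 2 - ‖p - u‖ ^ 2 := by
    have h := norm_add_sq_real (p - u) (u - z)
    rw [show (p - u) + (u - z) = p - z by abel] at h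
    linarith
  have dec : inner (𝕜 := ℝ) (s - p) a + inner (𝕜 := ℝ) (p - u) b + inner (𝕜 := ℝ) m (u - s)
      = inner (𝕜 := ℝ) (s - u) (a - c) + inner (𝕜 := ℝ) (c - m) (s - u)
        + inner (𝕜 := ℝ) (p - u) (b - a) := by
    simp only [inner_sub_left, inner_sub_right]
    rw [real_inner_comm c s, real_inner_comm c u]
    ring
  have c2 : γ * inner (𝕜 := ℝ) (p - u) (b - a) ≤ γ * (‖p - u‖ * (L * ‖z - u‖)) := by
    apply mul_le_mul_of_nonneg_left _ hγ.le
    calc inner (𝕜 := ℝ) (p - u) (b - a) ≤ ‖p - u‖ * ‖b - a‖ := real_inner_le_norm _ _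
      _ ≤ ‖p - u‖ * (L * ‖z - u‖) := mul_le_mul_of_nonneg_left hlip (norm_nonneg _)
  have t1 : inner (𝕜 := ℝ) (s - u) (a - c) ≤ -(μ * ‖u - s‖ ^ 2) := by
    have heq : inner (𝕜 := ℝ) (s - u) (a - c) = -inner (𝕜 := ℝ) (a - c) (u - s) := by
      rw [real_inner_comm, show s - u = -(u - s) by abel, inner_neg_right]
    rw [heq]; linarith
  have c4 : ‖z - s‖ ^ 2 ≤ 2 * ‖u - z‖ ^ 2 + 2 * ‖u - s‖ ^ 2 := by
    have htri : ‖z - s‖ ≤ ‖z - u‖ + ‖u - s‖ := by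
      calc ‖z - s‖ = ‖(z - u) + (u - s)‖ := by rw [show (z - u) + (u - s) = z - s by abel]
        _ ≤ ‖z - u‖ + ‖u - s‖ := norm_add_le _ _
    have h0 : ‖z - u‖ = ‖u - z‖ := norm_sub_rev _ _
    nlinarith [norm_nonneg (z - s), norm_nonneg (z - u), norm_nonneg (u - s),
      sq_nonneg (‖z - u‖ - ‖u - s‖)]
  have h3' : 0 ≤ γ * inner (𝕜 := ℝ) m (u - s) + γ * gu - γ * gs := by nlinarith
  have dec2 : γ * (inner (𝕜 := ℝ) (s - p) a + inner (𝕜 := ℝ) (p - u) b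
        + inner (𝕜 := ℝ) m (u - s))
      = γ * (inner (𝕜 := ℝ) (s - u) (a - c) + inner (𝕜 := ℝ) (c - m) (s - u)
        + inner (𝕜 := ℝ) (p - u) (b - a)) := by rw [dec]
  have hsum : 0 ≤ inner (𝕜 := ℝ) (s - p) (p - z) + inner (𝕜 := ℝ) (p - u) (u - z)
      + γ * (inner (𝕜 := ℝ) (s - u) (a - c) + inner (𝕜 := ℝ) (c - m) (s - u)
        + inner (𝕜 := ℝ) (p - u) (b - a)) := by
    rw [e1] at h1; rw [e2] at h2
    linarith [h1, h2, h3', dec2]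
  have hrev : ‖z - u‖ = ‖u - z‖ := norm_sub_rev _ _
  rw [hrev] at c2
  have c2' : γ * inner (𝕜 := ℝ) (p - u) (b - a)
      ≤ (1/2) * ‖p - u‖ ^ 2 + (1/2) * γ ^ 2 * L ^ 2 * ‖u - z‖ ^ 2 := by
    nlinarith [c2, sq_nonneg (‖p - u‖ - γ * L * ‖u - z‖)]
  have m2 : γ * inner (𝕜 := ℝ) (s - u) (a - c) ≤ -(γ * μ * ‖u - s‖ ^ 2) := by
    have := mul_le_mul_of_nonneg_left t1 hγ.le
    nlinarith [this]
  have c4' : -(2 * (γ * μ) * ‖u - s‖ ^ 2) ≤ -((γ * μ) * ‖z - s‖ ^ 2)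
      + 2 * (γ * μ) * ‖u - z‖ ^ 2 := by
    nlinarith [c4, mul_pos hγ hμ]
  linarith [hsum, n1, n2, c2', m2, c4']
open MeasureTheory ProbabilityTheory

private lemma seg_aux_l2tol1 {Ω : Type*} [MeasureSpace Ω] [IsProbabilityMeasure (ℙ : Measure Ω)]
    (f : Ω → ℝ) (hm : AEStronglyMeasurable f ℙ)
    (h2 : Integrable (fun ω => f ω ^ 2)) : Integrable f := by
  refine Integrable.mono' (h2.add (integrable_const 1)) hm (ae_of_all _ fun ω => ?_)
  simp only [Pi.add_apply]
  rw [Real.norm_eq_abs]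
  nlinarith [sq_abs (f ω), sq_nonneg (|f ω| - 1), abs_nonneg (f ω)]

private lemma seg_aux_compJ {Ω : Type*} [MeasureSpace Ω] [IsProbabilityMeasure (ℙ : Measure Ω)]
    {n : ℕ} (J : Ω → Fin n) (hJ : Measurable J) (f : Fin n → ℝ) :
    Integrable (fun ω => f (J ω)) ∧
      ∫ ω, f (J ω) = ∑ i, (ℙ {ω | J ω = i}).toReal * f i := by
  have hms : ∀ i : Fin n, MeasurableSet {ω | J ω = i} := fun i =>
    hJ (measurableSet_singleton i)
  have hrw : (fun ω => f (J ω))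
      = fun ω => ∑ i, ({ω | J ω = i}).indicator (fun _ => f i) ω := by
    funext ω
    simp [Set.indicator_apply, Finset.sum_ite_eq]
  have hintg : ∀ i : Fin n, Integrable (({ω | J ω = i}).indicator (fun _ => f i)) :=
    fun i => (integrable_const (f i)).indicator (hms i)
  constructor
  · rw [hrw]; exact integrable_finset_sum _ fun i _ => hintg i
  · rw [hrw, integral_finset_sum _ fun i _ => hintg i]
    refine Finset.sum_congr rfl fun i _ => ?_
    rw [integral_indicator_const (f i) (hms i), smul_eq_mul]
    rfl


set_option maxHeartbeats 1600000 in
/-- Expected one-step descent of the stochastic extragradient step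
`z^{t+1/2} = prox_{γg}(z^t − γF_J(z^t))`, `z^{t+1} = prox_{γg}(z^t − γF_J(z^{t+1/2}))`
with a uniformly random index `J` independent of `z⁰`:
`E‖z^{t+1} − z*‖² ≤ (1 − γμ)E‖z^t − z*‖² + (γ²L² + 2γμ − 1)E‖z^{t+1/2} − z^t‖²
  + (2γ²/β)σ*² + 2βE‖z^{t+1/2} − z⁰‖²`. -/
theorem stochastic_extragradient_descent_step
    (d n : ℕ) (hn : 0 < n) (L μ γ β σstar : ℝ)
    (hL : 0 < L) (hμ : 0 < μ) (hγ : 0 < γ) (hβ : 0 < β)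
    (g : EuclideanSpace ℝ (Fin d) → EReal)
    (hg_bot : ∀ x, g x ≠ ⊥) (hg_top : ∃ x, g x ≠ ⊤)
    (hg_convex : ∀ (x y : EuclideanSpace ℝ (Fin d)) (a b : ℝ), 0 ≤ a → 0 ≤ b → a + b = 1 →
      g (a • x + b • y) ≤ (a : EReal) * g x + (b : EReal) * g y)
    (hg_lsc : LowerSemicontinuous g)
    (prox : EuclideanSpace ℝ (Fin d) → EuclideanSpace ℝ (Fin d))
    (hprox : ∀ x y : EuclideanSpace ℝ (Fin d),
      (γ : EReal) * g (prox x) + ((‖prox x - x‖ ^ 2 / 2 : ℝ) : EReal)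
        ≤ (γ : EReal) * g y + ((‖y - x‖ ^ 2 / 2 : ℝ) : EReal))
    (F : Fin n → EuclideanSpace ℝ (Fin d) → EuclideanSpace ℝ (Fin d))
    (hLip : ∀ (i : Fin n) (z₁ z₂ : EuclideanSpace ℝ (Fin d)),
      ‖F i z₁ - F i z₂‖ ≤ L * ‖z₁ - z₂‖)
    (hmono : ∀ (i : Fin n) (z₁ z₂ : EuclideanSpace ℝ (Fin d)),
      μ * ‖z₁ - z₂‖ ^ 2 ≤ ⟪F i z₁ - F i z₂, z₁ - z₂⟫)
    (zstar : EuclideanSpace ℝ (Fin d)) (hzstar : g zstar ≠ ⊤)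
    (hVI : ∀ z, g zstar ≤ ((⟪(n : ℝ)⁻¹ • ∑ i, F i zstar, z - zstar⟫ : ℝ) : EReal) + g z)
    (hvar1 : (n : ℝ)⁻¹ * ∑ i, ‖F i zstar‖ ^ 2 ≤ σstar ^ 2)
    (hvar2 : ‖(n : ℝ)⁻¹ • ∑ i, F i zstar‖ ^ 2 ≤ σstar ^ 2)
    (Ω : Type*) [MeasureSpace Ω] [IsProbabilityMeasure (ℙ : Measure Ω)]
    (J : Ω → Fin n) (z0 zt zthalf zt1 : Ω → EuclideanSpace ℝ (Fin d))
    (hJmeas : Measurable J) (hz0meas : Measurable z0) (hztmeas : Measurable zt)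
    (hJunif : ∀ i : Fin n, ℙ {ω | J ω = i} = (n : ENNReal)⁻¹)
    (hindep : IndepFun J z0 ℙ)
    (hzthalf : ∀ ω, zthalf ω = prox (zt ω - γ • F (J ω) (zt ω)))
    (hzt1 : ∀ ω, zt1 ω = prox (zt ω - γ • F (J ω) (zthalf ω)))
    (hint1 : Integrable fun ω => ‖zt ω - zstar‖ ^ 2)
    (hint2 : Integrable fun ω => ‖zt1 ω - zstar‖ ^ 2)
    (hint3 : Integrable fun ω => ‖zthalf ω - zt ω‖ ^ 2)
    (hint4 : Integrable fun ω => ‖zthalf ω - z0 ω‖ ^ 2) :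
    (∫ ω, ‖zt1 ω - zstar‖ ^ 2)
      ≤ (1 - γ * μ) * (∫ ω, ‖zt ω - zstar‖ ^ 2)
        + (γ ^ 2 * L ^ 2 + 2 * γ * μ - 1) * (∫ ω, ‖zthalf ω - zt ω‖ ^ 2)
        + (2 * γ ^ 2 / β) * σstar ^ 2
        + 2 * β * (∫ ω, ‖zthalf ω - z0 ω‖ ^ 2) := by
  set m : EuclideanSpace ℝ (Fin d) := (n : ℝ)⁻¹ • ∑ i, F i zstar with hm
  have hnR : ((n : ℝ)) ≠ 0 := Nat.cast_ne_zero.2 hn.ne'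
  -- finiteness of g at prox points
  have hfin : ∀ x, g (prox x) ≠ ⊤ := by
    obtain ⟨y₀, hy₀⟩ := hg_top
    have hy₀' : g y₀ = ((g y₀).toReal : EReal) := (EReal.coe_toReal hy₀ (hg_bot y₀)).symm
    intro x htop
    have h := hprox x y₀
    rw [htop, hy₀', EReal.coe_mul_top_of_pos hγ, EReal.top_add_of_ne_bot (by simp),
      ← EReal.coe_mul, ← EReal.coe_add] at h
    exact (EReal.coe_lt_top _).not_ge h
  have proxVI := seg_aux_prox_vi γ hγ g hg_bot hg_convex prox hprox hfin
  -- real form of the variational inequality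
  have hVIR : ∀ z, g z ≠ ⊤ →
      (g zstar).toReal ≤ ⟪m, z - zstar⟫ + (g z).toReal := by
    intro z hz
    have h := hVI z
    rw [(EReal.coe_toReal hzstar (hg_bot _)).symm, (EReal.coe_toReal hz (hg_bot _)).symm,
      ← EReal.coe_add, EReal.coe_le_coe_iff] at h
    exact h
  -- deterministic per-ω inequality
  have key : ∀ ω, ‖zt1 ω - zstar‖ ^ 2
      ≤ (1 - γ * μ) * ‖zt ω - zstar‖ ^ 2
        + (γ ^ 2 * L ^ 2 + 2 * γ * μ - 1) * ‖zthalf ω - zt ω‖ ^ 2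
        + 2 * γ * ⟪F (J ω) zstar - m, zstar - zthalf ω⟫ := by
    intro ω
    have hu := hzthalf ω
    have hp := hzt1 ω
    have hfu : g (zthalf ω) ≠ ⊤ := by rw [hu]; exact hfin _
    have hfp : g (zt1 ω) ≠ ⊤ := by rw [hp]; exact hfin _
    have h1 := proxVI (zt ω - γ • F (J ω) (zthalf ω)) zstar hzstar
    rw [← hp] at h1
    have h2 := proxVI (zt ω - γ • F (J ω) (zt ω)) (zt1 ω) hfp
    rw [← hu] at h2
    have h3 := hVIR (zthalf ω) hfu
    exact seg_aux_det_step γ μ L (g zstar).toReal (g (zt1 ω)).toReal (g (zthalf ω)).toReal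
      hγ hμ (zt ω) (zthalf ω) (zt1 ω) zstar
      (F (J ω) (zthalf ω)) (F (J ω) (zt ω)) (F (J ω) zstar) m
      h1 h2 h3 (hLip (J ω) (zt ω) (zthalf ω)) (hmono (J ω) (zthalf ω) zstar)
  set W : Ω → EuclideanSpace ℝ (Fin d) := fun ω => zstar - z0 ω with hW
  -- pointwise inequality with Young's split
  set R : Ω → ℝ := fun ω =>
      (1 - γ * μ) * ‖zt ω - zstar‖ ^ 2
      + (γ ^ 2 * L ^ 2 + 2 * γ * μ - 1) * ‖zthalf ω - zt ω‖ ^ 2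
      + (γ ^ 2 / β) * ‖F (J ω) zstar - m‖ ^ 2
      + β * ‖zthalf ω - z0 ω‖ ^ 2
      + 2 * γ * ⟪F (J ω) zstar - m, W ω⟫ with hR
  have key2 : ∀ ω, ‖zt1 ω - zstar‖ ^ 2 ≤ R ω := by
    intro ω
    have hk := key ω
    have hsplit : ⟪F (J ω) zstar - m, zstar - zthalf ω⟫
        = ⟪F (J ω) zstar - m, W ω⟫ + ⟪F (J ω) zstar - m, z0 ω - zthalf ω⟫ := by
      rw [hW, ← inner_add_right]
      congr 1
      exact (sub_add_sub_cancel _ _ _).symm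
    have hcs := real_inner_le_norm (F (J ω) zstar - m) (z0 ω - zthalf ω)
    have hrev : ‖z0 ω - zthalf ω‖ = ‖zthalf ω - z0 ω‖ := norm_sub_rev _ _
    rw [hrev] at hcs
    have hq : (γ ^ 2 / β) * β = γ ^ 2 := by field_simp
    have hyoung : 2 * γ * ⟪F (J ω) zstar - m, z0 ω - zthalf ω⟫
        ≤ (γ ^ 2 / β) * ‖F (J ω) zstar - m‖ ^ 2 + β * ‖zthalf ω - z0 ω‖ ^ 2 := by
      have h2γ := mul_le_mul_of_nonneg_left hcs (by positivity : (0:ℝ) ≤ 2 * γ)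
      nlinarith [h2γ, hq, hβ,
        sq_nonneg (γ * ‖F (J ω) zstar - m‖ - β * ‖zthalf ω - z0 ω‖)]
    rw [hR]
    simp only
    rw [hsplit] at hk
    linarith
  -- integrability infrastructure
  have hWm : AEStronglyMeasurable W ℙ := (measurable_const.sub hz0meas).aestronglyMeasurable
  have hA1 : Integrable (fun ω => ‖zt ω - zstar‖) :=
    seg_aux_l2tol1 _ ((hztmeas.sub measurable_const).norm.aestronglyMeasurable) hint1
  have hA2m : AEStronglyMeasurable (fun ω => ‖zthalf ω - zt ω‖) ℙ := by
    have hfe : (fun ω => ‖zthalf ω - zt ω‖) = fun ω => Real.sqrt (‖zthalf ω - zt ω‖ ^ 2) :=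
      funext fun ω => (Real.sqrt_sq (norm_nonneg _)).symm
    rw [hfe]
    exact Real.continuous_sqrt.comp_aestronglyMeasurable hint3.1
  have hA2 : Integrable (fun ω => ‖zthalf ω - zt ω‖) := seg_aux_l2tol1 _ hA2m hint3
  have hA3m : AEStronglyMeasurable (fun ω => ‖zthalf ω - z0 ω‖) ℙ := by
    have hfe : (fun ω => ‖zthalf ω - z0 ω‖) = fun ω => Real.sqrt (‖zthalf ω - z0 ω‖ ^ 2) :=
      funext fun ω => (Real.sqrt_sq (norm_nonneg _)).symm
    rw [hfe]
    exact Real.continuous_sqrt.comp_aestronglyMeasurable hint4.1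
  have hA3 : Integrable (fun ω => ‖zthalf ω - z0 ω‖) := seg_aux_l2tol1 _ hA3m hint4
  have hIW : Integrable W := by
    refine Integrable.mono' ((hA1.add hA2).add hA3) hWm (ae_of_all _ fun ω => ?_)
    simp only [Pi.add_apply]
    calc ‖W ω‖ = ‖(zstar - zt ω) + (zt ω - zthalf ω) + (zthalf ω - z0 ω)‖ := by
          rw [hW]; congr 1; abel
      _ ≤ ‖(zstar - zt ω) + (zt ω - zthalf ω)‖ + ‖zthalf ω - z0 ω‖ := norm_add_le _ _
      _ ≤ ‖zstar - zt ω‖ + ‖zt ω - zthalf ω‖ + ‖zthalf ω - z0 ω‖ := by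
          have := norm_add_le (zstar - zt ω) (zt ω - zthalf ω); linarith
      _ = ‖zt ω - zstar‖ + ‖zthalf ω - zt ω‖ + ‖zthalf ω - z0 ω‖ := by
          rw [norm_sub_rev zstar (zt ω), norm_sub_rev (zt ω) (zthalf ω)]
  have hms : ∀ i : Fin n, MeasurableSet {ω | J ω = i} := fun i =>
    hJmeas (measurableSet_singleton i)
  have hIYi : ∀ i : Fin n, Integrable (fun ω => ⟪F i zstar - m, W ω⟫) :=
    fun i => hIW.const_inner _
  -- the decomposition of Y into indicator pieces
  have hYrw : (fun ω => ⟪F (J ω) zstar - m, W ω⟫)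
      = fun ω => ∑ i, ({ω | J ω = i}).indicator (fun _ => (1:ℝ)) ω
          * ⟪F i zstar - m, W ω⟫ := by
    funext ω
    simp [Set.indicator_apply, ite_mul, Finset.sum_ite_eq]
  have hXm : ∀ i : Fin n,
      AEStronglyMeasurable (fun ω => ({ω | J ω = i}).indicator (fun _ => (1:ℝ)) ω) ℙ :=
    fun i => ((measurable_const.indicator (hms i))).aestronglyMeasurable
  have hprodInt : ∀ i : Fin n, Integrable (fun ω =>
      ({ω | J ω = i}).indicator (fun _ => (1:ℝ)) ω * ⟪F i zstar - m, W ω⟫) := by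
    intro i
    refine (hIYi i).bdd_mul (c := 1) (hXm i) (ae_of_all _ fun ω => ?_)
    rw [Set.indicator_apply]
    split <;> simp
  have hIY : Integrable (fun ω => ⟪F (J ω) zstar - m, W ω⟫) := by
    rw [hYrw]
    exact integrable_finset_sum _ fun i _ => hprodInt i
  -- expectation of Y is zero
  have hS : (∑ i, F i zstar) = (n : ℝ) • m := by
    rw [hm, smul_smul, mul_inv_cancel₀ hnR, one_smul]
  have hzero : ∑ i : Fin n, (F i zstar - m) = 0 := by
    rw [Finset.sum_sub_distrib, Finset.sum_const, Finset.card_univ, Fintype.card_fin, hS,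
      ← Nat.cast_smul_eq_nsmul ℝ n m, sub_self]
  have hEY : (∫ ω, ⟪F (J ω) zstar - m, W ω⟫) = 0 := by
    rw [hYrw, integral_finset_sum _ fun i _ => hprodInt i]
    have hterm : ∀ i : Fin n, (∫ ω,
        ({ω | J ω = i}).indicator (fun _ => (1:ℝ)) ω * ⟪F i zstar - m, W ω⟫)
        = (ℙ {ω | J ω = i}).toReal * ⟪F i zstar - m, ∫ ω, W ω⟫ := by
      intro i
      have hXY : IndepFun (fun ω => ({ω | J ω = i}).indicator (fun _ => (1:ℝ)) ω)
          (fun ω => ⟪F i zstar - m, W ω⟫) ℙ := by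
        have hφ : Measurable (fun j : Fin n => if j = i then (1:ℝ) else 0) :=
          measurable_of_countable _
        have hψ : Measurable (fun x : EuclideanSpace ℝ (Fin d) =>
            (⟪F i zstar - m, zstar - x⟫ : ℝ)) :=
          (Continuous.inner continuous_const (continuous_const.sub continuous_id)).measurable
        have := hindep.comp hφ hψ
        convert this using 1
        funext ω
        rw [Set.indicator_apply]
        rfl
        rfl
      have hXint : Integrable (fun ω => ({ω | J ω = i}).indicator (fun _ => (1:ℝ)) ω) :=
        (integrable_const (1:ℝ)).indicator (hms i)
      have := hXY.integral_mul_eq_mul_integral hXint.1 (hIYi i).1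
      rw [show ((fun ω => ({ω | J ω = i}).indicator (fun _ => (1:ℝ)) ω)
          * (fun ω => ⟪F i zstar - m, W ω⟫))
          = fun ω => ({ω | J ω = i}).indicator (fun _ => (1:ℝ)) ω
              * ⟪F i zstar - m, W ω⟫ from rfl] at this
      rw [this, integral_inner hIW]
      have : (∫ ω, ({ω | J ω = i}).indicator (fun _ => (1:ℝ)) ω)
          = (ℙ {ω | J ω = i}).toReal := by
        rw [show (fun ω => ({ω | J ω = i}).indicator (fun _ => (1:ℝ)) ω)
            = ({ω | J ω = i}).indicator (fun _ => (1:ℝ)) from rfl]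
        rw [integral_indicator_const (1:ℝ) (hms i), smul_eq_mul, mul_one]
        rfl
      rw [this]
    rw [Finset.sum_congr rfl fun i _ => hterm i]
    have : ∀ i : Fin n, (ℙ {ω | J ω = i}).toReal = (n : ℝ)⁻¹ := by
      intro i; rw [hJunif i]; simp
    rw [Finset.sum_congr rfl fun i _ => by rw [this i]]
    rw [← Finset.mul_sum, ← sum_inner, hzero]
    simp
  -- expectation of the variance term
  have hcomp := seg_aux_compJ J hJmeas (fun i => ‖F i zstar - m‖ ^ 2)
  have hIV : Integrable (fun ω => ‖F (J ω) zstar - m‖ ^ 2) := hcomp.1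
  have hEV : (∫ ω, ‖F (J ω) zstar - m‖ ^ 2) ≤ σstar ^ 2 := by
    rw [hcomp.2]
    have hP : ∀ i : Fin n, (ℙ {ω | J ω = i}).toReal = (n : ℝ)⁻¹ := by
      intro i; rw [hJunif i]; simp
    rw [Finset.sum_congr rfl fun i _ => by rw [hP i]]
    rw [← Finset.mul_sum]
    have hident : ∑ i : Fin n, ‖F i zstar - m‖ ^ 2
        = (∑ i, ‖F i zstar‖ ^ 2) - (n : ℝ) * ‖m‖ ^ 2 := by
      have hterm : ∀ i : Fin n, ‖F i zstar - m‖ ^ 2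
          = ‖F i zstar‖ ^ 2 - 2 * ⟪F i zstar, m⟫ + ‖m‖ ^ 2 := by
        intro i
        have := norm_sub_sq_real (F i zstar) m
        linarith
      rw [Finset.sum_congr rfl fun i _ => hterm i]
      rw [Finset.sum_add_distrib, Finset.sum_sub_distrib, ← Finset.mul_sum,
        ← sum_inner, hS, real_inner_smul_left, real_inner_self_eq_norm_sq]
      rw [Finset.sum_const, Finset.card_univ, Fintype.card_fin, nsmul_eq_mul]
      ring
    rw [hident]
    have hmnn : (0:ℝ) ≤ ‖m‖ ^ 2 := sq_nonneg _
    have : (n : ℝ)⁻¹ * ((∑ i, ‖F i zstar‖ ^ 2) - (n : ℝ) * ‖m‖ ^ 2)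
        = (n : ℝ)⁻¹ * (∑ i, ‖F i zstar‖ ^ 2) - ‖m‖ ^ 2 := by
      field_simp
    rw [this]
    linarith [hvar1]
  -- integrate the pointwise inequality
  have hI1 : Integrable (fun ω => (1 - γ * μ) * ‖zt ω - zstar‖ ^ 2) := hint1.const_mul _
  have hI2 : Integrable (fun ω =>
      (γ ^ 2 * L ^ 2 + 2 * γ * μ - 1) * ‖zthalf ω - zt ω‖ ^ 2) := hint3.const_mul _
  have hI3 : Integrable (fun ω => (γ ^ 2 / β) * ‖F (J ω) zstar - m‖ ^ 2) := hIV.const_mul _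
  have hI4 : Integrable (fun ω => β * ‖zthalf ω - z0 ω‖ ^ 2) := hint4.const_mul _
  have hI5 : Integrable (fun ω => 2 * γ * ⟪F (J ω) zstar - m, W ω⟫) := hIY.const_mul _
  have hI12 := hI1.add hI2
  have hI123 := hI12.add hI3
  have hI1234 := hI123.add hI4
  have hRint : Integrable R := hI1234.add hI5
  have hle := integral_mono hint2 hRint key2
  have hsplitint : (∫ ω, R ω)
      = (1 - γ * μ) * (∫ ω, ‖zt ω - zstar‖ ^ 2)
        + (γ ^ 2 * L ^ 2 + 2 * γ * μ - 1) * (∫ ω, ‖zthalf ω - zt ω‖ ^ 2)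
        + (γ ^ 2 / β) * (∫ ω, ‖F (J ω) zstar - m‖ ^ 2)
        + β * (∫ ω, ‖zthalf ω - z0 ω‖ ^ 2)
        + 2 * γ * (∫ ω, ⟪F (J ω) zstar - m, W ω⟫) := by
    rw [hR]
    have e5 := integral_add hI1234 hI5
    simp only [Pi.add_apply] at e5
    have e4 := integral_add hI123 hI4
    simp only [Pi.add_apply] at e4
    have e3 := integral_add hI12 hI3
    simp only [Pi.add_apply] at e3
    have e2 := integral_add hI1 hI2
    rw [e5, e4, e3, e2, integral_const_mul _, integral_const_mul _, integral_const_mul _,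
      integral_const_mul _, integral_const_mul _]
  rw [hsplitint, hEY, mul_zero, add_zero] at hle
  have hI4nn : (0:ℝ) ≤ ∫ ω, ‖zthalf ω - z0 ω‖ ^ 2 :=
    integral_nonneg fun ω => sq_nonneg _
  have hEV' := mul_le_mul_of_nonneg_left hEV (by positivity : (0:ℝ) ≤ γ ^ 2 / β)
  have hσnn : (0:ℝ) ≤ (γ ^ 2 / β) * σstar ^ 2 := by positivity
  have h2q : (2 * γ ^ 2 / β) * σstar ^ 2 = (γ ^ 2 / β) * σstar ^ 2 + (γ ^ 2 / β) * σstar ^ 2 := by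
    ring
  have hβ4 : (0:ℝ) ≤ β * (∫ ω, ‖zthalf ω - z0 ω‖ ^ 2) := mul_nonneg hβ.le hI4nn
  linarith [hle, hEV', hσnn, hβ4, h2q]
end

section
/- Let γ, μ > 0 with q := 1 − γμ/2 ∈ (0,1), let c ≥ 0, let T ≥ 1 be an integer, and let a_0, a_1, …, a_T be nonnegative reals satisfying the weighted inequality ∑_{k=0}^{T−1} q^{−k} a_{k+1} ≤ (1 − γμ) ∑_{k=0}^{T−1} q^{−k} a_k + c ∑_{k=0}^{T−1} q^{−k}. Then a_T ≤ (1 − γμ/2)^T a_0 + 2c/(γμ). -/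
/-- From the weighted-sum inequality
`∑_{k<T} q^{−k} a_{k+1} ≤ (1 − γμ) ∑_{k<T} q^{−k} a_k + c ∑_{k<T} q^{−k}` with
`q = 1 − γμ/2 ∈ (0,1)` and nonnegative `a_0, …, a_T`, one gets
`a_T ≤ (1 − γμ/2)^T a_0 + 2c/(γμ)`. -/
theorem weighted_sum_recursion_to_linear_rate
    (γ μ c : ℝ) (hγ : 0 < γ) (hμ : 0 < μ) (hc : 0 ≤ c)
    (hq0 : 0 < 1 - γ * μ / 2) (hq1 : 1 - γ * μ / 2 < 1)
    (T : ℕ) (hT : 1 ≤ T) (a : ℕ → ℝ) (ha : ∀ k ≤ T, 0 ≤ a k)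
    (hsum : ∑ k ∈ Finset.range T, ((1 - γ * μ / 2)⁻¹) ^ k * a (k + 1)
        ≤ (1 - γ * μ) * ∑ k ∈ Finset.range T, ((1 - γ * μ / 2)⁻¹) ^ k * a k
          + c * ∑ k ∈ Finset.range T, ((1 - γ * μ / 2)⁻¹) ^ k) :
    a T ≤ (1 - γ * μ / 2) ^ T * a 0 + 2 * c / (γ * μ) := by
  set q : ℝ := 1 - γ * μ / 2 with hqdef
  have hq : 0 < q := hq0
  have hqne : q ≠ 0 := ne_of_gt hq
  have hqr : q * q⁻¹ = 1 := mul_inv_cancel₀ hqne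
  set S : ℝ := ∑ k ∈ Finset.range T, (q⁻¹) ^ k * a k with hSdef
  set G : ℝ := ∑ k ∈ Finset.range T, (q⁻¹) ^ k with hGdef
  set P : ℝ := (q⁻¹) ^ T with hPdef
  have hPpos : 0 < P := pow_pos (inv_pos.mpr hq) T
  have hPQ : q ^ T * P = 1 := by
    rw [hPdef, ← mul_pow, hqr, one_pow]
  -- shift the sum
  have hshift : ∑ k ∈ Finset.range T, (q⁻¹) ^ k * a (k + 1)
      = q * (S + P * a T - a 0) := by
    have h1 : ∀ k ∈ Finset.range T, (q⁻¹ : ℝ) ^ k * a (k + 1)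
        = q * ((q⁻¹) ^ (k + 1) * a (k + 1)) := by
      intro k _
      rw [pow_succ]
      rw [show q * ((q⁻¹) ^ k * q⁻¹ * a (k + 1))
          = (q * q⁻¹) * ((q⁻¹) ^ k * a (k + 1)) from by ring, hqr, one_mul]
    rw [Finset.sum_congr rfl h1, ← Finset.mul_sum]
    congr 1
    have h2 : ∑ k ∈ Finset.range (T + 1), (q⁻¹) ^ k * a k
        = (∑ k ∈ Finset.range T, (q⁻¹) ^ (k + 1) * a (k + 1)) + (q⁻¹) ^ 0 * a 0 :=
      Finset.sum_range_succ' _ T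
    have h3 : ∑ k ∈ Finset.range (T + 1), (q⁻¹) ^ k * a k
        = S + P * a T := Finset.sum_range_succ _ T
    rw [h3] at h2
    simp only [pow_zero, one_mul] at h2
    linarith
  have hS : 0 ≤ S := by
    apply Finset.sum_nonneg
    intro k hk
    exact mul_nonneg (pow_nonneg (inv_nonneg.mpr hq.le) k)
      (ha k (Finset.mem_range.mp hk).le)
  have hGnn : 0 ≤ G := by
    apply Finset.sum_nonneg
    intro k _
    exact pow_nonneg (inv_nonneg.mpr hq.le) k
  -- key inequality
  have key : q * P * a T ≤ q * a 0 + c * G := by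
    rw [hshift, show (1 : ℝ) - γ * μ = 2 * q - 1 from by rw [hqdef]; ring] at hsum
    nlinarith [mul_nonneg (sub_nonneg.mpr hq1.le) hS]
  -- geometric sum
  have hG : G * (q⁻¹ - 1) = P - 1 := geom_sum_mul q⁻¹ T
  have hq1' : q * (q⁻¹ - 1) = γ * μ / 2 := by
    rw [mul_sub, hqr, mul_one]; rw [hqdef]; ring
  have hGval : G * (γ * μ / 2) = q * (P - 1) := by
    calc G * (γ * μ / 2) = G * (q * (q⁻¹ - 1)) := by rw [hq1']
    _ = q * (G * (q⁻¹ - 1)) := by ring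
    _ = q * (P - 1) := by rw [hG]
  have hcG : c * G ≤ 2 * c * q * P / (γ * μ) := by
    have hμγ : 0 < γ * μ := mul_pos hγ hμ
    have hG2 : G * (γ * μ) = 2 * (q * (P - 1)) := by rw [← hGval]; ring
    rw [le_div_iff₀ hμγ]
    calc c * G * (γ * μ) = c * (G * (γ * μ)) := by ring
      _ = c * (2 * (q * (P - 1))) := by rw [hG2]
      _ = 2 * c * q * P - 2 * (c * q) := by ring
      _ ≤ 2 * c * q * P := by linarith [mul_nonneg hc hq.le]
  have hmain : q * P * a T ≤ q * P * (q ^ T * a 0 + 2 * c / (γ * μ)) := by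
    have expand : q * P * (q ^ T * a 0 + 2 * c / (γ * μ))
        = q * a 0 + 2 * c * q * P / (γ * μ) := by
      have h : q * P * (q ^ T * a 0) = (q ^ T * P) * (q * a 0) := by ring
      rw [mul_add, h, hPQ, one_mul]
      ring
    rw [expand]
    exact key.trans (add_le_add (le_refl (q * a 0)) hcG)
  exact le_of_mul_le_mul_left hmain (mul_pos hq hPpos)
end
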